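/- arXiv:2412.21120 — 2 statements merged into one kernel-verified Lean document; each statement's English description precedes it below -/
import Mathlib

section
/- For any s ∈ [r] and any subset A ⊆ [q] with A ⊉ [l] such that [l] ∖ A = {t} is a singleton and l+1 ∉ A, one has (∂σ_{e_s} + σ_{e_s}∂)(ε_A) = a_s ε_A in the pivot resolution T_{1,…,l}. -/
open MvPolynomial Finset

noncomputable section

/-- `fsign A B` is `0` if `A ∩ B ≠ ∅`, and otherwise `(−1)^{p(A,B)}` where `p(A,B)`
is the number of pairs `(a,b) ∈ A × B` with `a > b`. -/
def fsign {α : Type*} [LinearOrder α] [DecidableEq α] (A B : Finset α) : ℤ :=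
  if A ∩ B = ∅ then (-1 : ℤ) ^ (((A ×ˢ B).filter fun p => p.2 < p.1).card) else 0

/-- The total module underlying the Taylor complex: free over `Q = k[x_1,…,x_n]`
with basis `ε_τ` indexed by all subsets `τ ⊆ [q]`. -/
abbrev TotMod (k : Type*) [Field k] (n q : ℕ) : Type _ :=
  Finset (Fin q) →₀ MvPolynomial (Fin n) k

/-- `m_τ = lcm{m_i : i ∈ τ}`, where `m_i` is the monomial with exponent vector `D i`. -/
def lcmMono (k : Type*) [Field k] (n q : ℕ) (D : Fin q → (Fin n →₀ ℕ))
    (τ : Finset (Fin q)) : MvPolynomial (Fin n) k :=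
  monomial (τ.sup D) (1 : k)

/-- The monomial ideal `I = (m_1, …, m_q)`. -/
def monIdeal (k : Type*) [Field k] (n q : ℕ) (D : Fin q → (Fin n →₀ ℕ)) :
    Ideal (MvPolynomial (Fin n) k) :=
  Ideal.span (Set.range fun i => monomial (D i) (1 : k))

/-- The Taylor differential `∂(ε_τ) = Σ_{j∈τ} sign(j, τ∖{j}) (m_τ/m_{τ∖{j}}) ε_{τ∖{j}}`,
as a linear endomorphism of the total module. -/
def taylorD (k : Type*) [Field k] (n q : ℕ) (D : Fin q → (Fin n →₀ ℕ)) :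
    TotMod k n q →ₗ[MvPolynomial (Fin n) k] TotMod k n q :=
  Finsupp.linearCombination _ fun τ =>
    ∑ j ∈ τ, Finsupp.single (τ \ {j})
      ((fsign {j} (τ \ {j}) : MvPolynomial (Fin n) k) *
        monomial (τ.sup D - (τ \ {j}).sup D) (1 : k))

/-- The degree-`i` piece of the subcomplex of the Taylor complex spanned by the
`ε_τ` with `τ ∈ Ω`: the free submodule with basis `{ε_τ : τ ∈ Ω, |τ| = i}`. -/
def piece (k : Type*) [Field k] (n q : ℕ) (Ω : Set (Finset (Fin q))) (i : ℕ) :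
    Submodule (MvPolynomial (Fin n) k) (TotMod k n q) :=
  Finsupp.supported _ _ {τ | τ ∈ Ω ∧ τ.card = i}

/-- The subcomplex of the Taylor complex spanned by all `ε_τ` with `τ ∈ Ω`. -/
def subcx (k : Type*) [Field k] (n q : ℕ) (Ω : Set (Finset (Fin q))) :
    Submodule (MvPolynomial (Fin n) k) (TotMod k n q) :=
  Finsupp.supported _ _ Ω

/-- The index family of the pivot complex `T_S`: all `τ` with `τ ⊉ S`. -/
def pivotΩ {q : ℕ} (S : Finset (Fin q)) : Set (Finset (Fin q)) := {τ | ¬ S ⊆ τ}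

/-- The subcomplex of the Taylor complex spanned by `{ε_τ : τ ∈ Ω}` is a resolution
of `Q/I`: it is exact in homological degrees `≥ 1`, and its zeroth homology is
identified with `Q/I` via the augmentation `ε_∅ ↦ 1`. -/
def IsResolutionOf (k : Type*) [Field k] (n q : ℕ) (D : Fin q → (Fin n →₀ ℕ))
    (Ω : Set (Finset (Fin q))) : Prop :=
  (∀ i : ℕ, ∀ x ∈ piece k n q Ω (i + 1), taylorD k n q D x = 0 →
      ∃ y ∈ piece k n q Ω (i + 2), taylorD k n q D y = x) ∧
  (∀ x ∈ piece k n q Ω 0,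
      (x (∅ : Finset (Fin q)) ∈ monIdeal k n q D ↔
        ∃ y ∈ piece k n q Ω 1, taylorD k n q D y = x))

/-- The Scarf set of `I`: all `t` such that there are two distinct subsets
`τ ≠ τ'` of `[q]` with `|τ| = t` and `m_τ = m_{τ'}`.  The Scarf number of `I`
is `sInf` of this set; `scarf(I) = ∞` corresponds to this set being empty. -/
def scarfSet (k : Type*) [Field k] (n q : ℕ) (D : Fin q → (Fin n →₀ ℕ)) : Set ℕ :=
  {t | ∃ τ τ' : Finset (Fin q), τ ≠ τ' ∧ τ.card = t ∧
        lcmMono k n q D τ = lcmMono k n q D τ'}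


/-- The index set `[l] = {1,…,l}`, realized as the first `l` elements of `Fin q`. -/
def Lset (q l : ℕ) : Finset (Fin q) :=
  Finset.univ.filter fun i => (i : ℕ) < l

/-- The pivot index `l+1`, realized as the element of `Fin q` with value `l`. -/
def pivElt (q l : ℕ) (hq : l < q) : Fin q := ⟨l, hq⟩

/-- The unique element `t` of `[l] ∖ A` (when it exists). -/
def tOf (q l : ℕ) (hq : l < q) (A : Finset (Fin q)) : Fin q :=
  if h : (Lset q l \ A).Nonempty then (Lset q l \ A).min' h else pivElt q l hq

/-- The sum `Σ_{j ∈ J} sign(j,A) a_{sj} (m_j m_A / m_{A∪{j}}) ε_{A∪{j}}`,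
where `c j = a_{sj}`. -/
def sigTerm (k : Type*) [Field k] (n q : ℕ) (D : Fin q → (Fin n →₀ ℕ))
    (c : Fin q → MvPolynomial (Fin n) k) (A J : Finset (Fin q)) : TotMod k n q :=
  ∑ j ∈ J, Finsupp.single (insert j A)
    ((fsign {j} A : MvPolynomial (Fin n) k) * c j *
      monomial (D j + A.sup D - (insert j A).sup D) (1 : k))

/-- The correction term
`(−1)^{l+1} sign(t,A) a_{st} Σ_{i∈[l]} sign(i, A∪{t}∖{i})
  (m_t m_A / m_{A∪{t}∪{l+1}∖{i}}) ε_{A∪{t}∪{l+1}∖{i}}`. -/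
def sigCorr (k : Type*) [Field k] (n q l : ℕ) (hq : l < q)
    (D : Fin q → (Fin n →₀ ℕ)) (c : Fin q → MvPolynomial (Fin n) k)
    (A : Finset (Fin q)) (t : Fin q) : TotMod k n q :=
  ∑ i ∈ Lset q l, Finsupp.single ((insert (pivElt q l hq) (insert t A)) \ {i})
    ((-1 : MvPolynomial (Fin n) k) ^ (l + 1) *
      (fsign {t} A : MvPolynomial (Fin n) k) * c t *
      (fsign {i} (insert t A \ {i}) : MvPolynomial (Fin n) k) *
      monomial (D t + A.sup D - ((insert (pivElt q l hq) (insert t A)) \ {i}).sup D)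
        (1 : k))

/-- The homotopy `σ_{e_s}` (for coefficients `c j = a_{sj}`), defined on basis
elements `ε_A` by the three-case formula of Theorem 5.1 of the paper. -/
def sigmaMap (k : Type*) [Field k] (n q l : ℕ) (hq : l < q)
    (D : Fin q → (Fin n →₀ ℕ)) (c : Fin q → MvPolynomial (Fin n) k) :
    TotMod k n q →ₗ[MvPolynomial (Fin n) k] TotMod k n q :=
  Finsupp.linearCombination _ fun A =>
    if (A ∩ Lset q l).card ≠ l - 1 then
      sigTerm k n q D c A Aᶜ
    else if pivElt q l hq ∈ A then
      sigTerm k n q D c A (insert (tOf q l hq A) A)ᶜ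
    else
      sigTerm k n q D c A (insert (tOf q l hq A) A)ᶜ +
        sigCorr k n q l hq D c A (tOf q l hq A)

/-- The element `a_s = Σ_{j=1}^q a_{sj} m_j`, for coefficients `c j = a_{sj}`. -/
def aElt (k : Type*) [Field k] (n q : ℕ) (D : Fin q → (Fin n →₀ ℕ))
    (c : Fin q → MvPolynomial (Fin n) k) : MvPolynomial (Fin n) k :=
  ∑ j : Fin q, c j * monomial (D j) (1 : k)
end

noncomputable section HelperSection
open Finset MvPolynomial

namespace TaylorHelp

variable {α : Type*} [LinearOrder α] [DecidableEq α]

/-- number of elements of `C` smaller than `i`. -/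
def nuF (i : α) (C : Finset α) : ℕ := (C.filter (· < i)).card

lemma fsign_singleton (i : α) (C : Finset α) :
    fsign {i} C = if i ∈ C then 0 else (-1 : ℤ) ^ (nuF i C) := by
  by_cases h : i ∈ C
  · rw [fsign, if_neg, if_pos h]
    intro he
    have : i ∈ ({i} : Finset α) ∩ C := by simp [h]
    simp [he] at this
  · rw [fsign, if_pos, if_neg h]
    · congr 1
      have h2 : (({i} ×ˢ C).filter fun p => p.2 < p.1) = {i} ×ˢ (C.filter (· < i)) := by
        ext ⟨a, b⟩
        simp only [mem_filter, mem_product, mem_singleton]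
        constructor
        · rintro ⟨⟨rfl, hb⟩, hlt⟩; exact ⟨rfl, hb, hlt⟩
        · rintro ⟨rfl, hb, hlt⟩; exact ⟨⟨rfl, hb⟩, hlt⟩
      rw [h2, card_product, card_singleton, one_mul, nuF]
    · ext x; simp only [mem_inter, mem_singleton, notMem_empty, iff_false, not_and]
      rintro rfl; exact h

lemma nuF_insert {a : α} {C : Finset α} (h : a ∉ C) (i : α) :
    nuF i (insert a C) = nuF i C + (if a < i then 1 else 0) := by
  rw [nuF, nuF, filter_insert]
  split_ifs with h'
  · rw [card_insert_of_notMem (fun hc => h (mem_of_mem_filter a hc))]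
  · rw [add_zero]

lemma nuF_sdiff {a : α} {C : Finset α} (h : a ∈ C) (i : α) :
    nuF i C = nuF i (C \ {a}) + (if a < i then 1 else 0) := by
  have hins : C = insert a (C \ {a}) := by
    rw [sdiff_singleton_eq_erase, insert_erase h]
  conv_lhs => rw [hins]
  exact nuF_insert (by simp) i

lemma neg_one_pow_add_eq_zero {a b : ℕ} (h : (a + b) % 2 = 1) :
    (-1 : ℤ) ^ a + (-1 : ℤ) ^ b = 0 := by
  rcases Nat.even_or_odd a with ha | ha <;> rcases Nat.even_or_odd b with hb | hb
  · exfalso; rw [Nat.even_iff] at ha hb; omega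
  · rw [ha.neg_one_pow, hb.neg_one_pow]; ring
  · rw [ha.neg_one_pow, hb.neg_one_pow]; ring
  · exfalso; rw [Nat.odd_iff] at ha hb; omega

lemma neg_one_pow_congr {a b : ℕ} (h : (a + b) % 2 = 0) :
    (-1 : ℤ) ^ a = (-1 : ℤ) ^ b := by
  rcases Nat.even_or_odd a with ha | ha <;> rcases Nat.even_or_odd b with hb | hb
  · rw [ha.neg_one_pow, hb.neg_one_pow]
  · exfalso; rw [Nat.even_iff] at ha; rw [Nat.odd_iff] at hb; omega
  · exfalso; rw [Nat.odd_iff] at ha; rw [Nat.even_iff] at hb; omega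
  · rw [ha.neg_one_pow, hb.neg_one_pow]

lemma fsign_mul_self {i : α} {C : Finset α} (h : i ∉ C) :
    fsign {i} C * fsign {i} C = 1 := by
  rw [fsign_singleton, if_neg h, ← mul_pow]; norm_num

/-- core sign identity -/
lemma fsign_core {i j : α} {C : Finset α} (hij : i ≠ j) (hi : i ∉ C) (hj : j ∉ C) :
    fsign {j} (insert i C) * fsign {i} (insert j C) + fsign {i} C * fsign {j} C = 0 := by
  rw [fsign_singleton j, fsign_singleton i (insert j C), fsign_singleton i C,
    fsign_singleton j C, if_neg hi, if_neg hj,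
    if_neg (by simp [hj, hij.symm] : j ∉ insert i C),
    if_neg (by simp [hi, hij] : i ∉ insert j C),
    nuF_insert hi j, nuF_insert hj i, ← pow_add, ← pow_add]
  apply neg_one_pow_add_eq_zero
  rcases lt_or_gt_of_ne hij with h | h
  · rw [if_pos h, if_neg (not_lt_of_gt h)]; omega
  · rw [if_neg (not_lt_of_gt h), if_pos h]; omega


section ModuleHelpers

variable {k : Type*} [Field k] {n q : ℕ}

lemma tsub_helper (w x y z : Fin n →₀ ℕ) (h1 : y ≤ x) (h2 : z ≤ w + y) :
    (x - y) + (w + y - z) = w + x - z := by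
  ext a
  have h1a := Finsupp.le_def.mp h1 a
  have h2a := Finsupp.le_def.mp h2 a
  simp only [Finsupp.add_apply, Finsupp.tsub_apply] at *
  omega

lemma mono_mul_mono (u v : Fin n →₀ ℕ) :
    (monomial u (1 : k)) * monomial v 1 = monomial (u + v) 1 := by
  rw [monomial_mul, one_mul]

lemma taylorD_single (D : Fin q → (Fin n →₀ ℕ)) (C : Finset (Fin q))
    (r : MvPolynomial (Fin n) k) :
    taylorD k n q D (Finsupp.single C r) =
      ∑ j ∈ C, Finsupp.single (C \ {j})
        (r * ((fsign {j} (C \ {j}) : MvPolynomial (Fin n) k) *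
          monomial (C.sup D - (C \ {j}).sup D) (1 : k))) := by
  rw [taylorD, Finsupp.linearCombination_single, Finset.smul_sum]
  exact Finset.sum_congr rfl fun j _ => Finsupp.smul_single' _ _ _

lemma cast_core {i j : Fin q} {C : Finset (Fin q)} (hij : i ≠ j) (hi : i ∉ C) (hj : j ∉ C) :
    ((fsign {j} (insert i C) : MvPolynomial (Fin n) k) * (fsign {i} (insert j C) : MvPolynomial (Fin n) k)
      + (fsign {i} C : MvPolynomial (Fin n) k) * (fsign {j} C : MvPolynomial (Fin n) k)) = 0 := by
  rw [← Int.cast_mul, ← Int.cast_mul, ← Int.cast_add, fsign_core hij hi hj, Int.cast_zero]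

lemma cast_sq {i : Fin q} {C : Finset (Fin q)} (hi : i ∉ C) :
    (fsign {i} C : MvPolynomial (Fin n) k) * (fsign {i} C : MvPolynomial (Fin n) k) = 1 := by
  rw [← Int.cast_mul, fsign_mul_self hi, Int.cast_one]

set_option maxHeartbeats 2000000 in
lemma lemA (D : Fin q → (Fin n →₀ ℕ)) (c : Fin q → MvPolynomial (Fin n) k)
    (A : Finset (Fin q)) :
    taylorD k n q D (sigTerm k n q D c A Aᶜ)
      + ∑ i ∈ A, ((fsign {i} (A \ {i}) : MvPolynomial (Fin n) k) *
          monomial (A.sup D - (A \ {i}).sup D) (1 : k)) • sigTerm k n q D c (A \ {i}) (A \ {i})ᶜ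
    = aElt k n q D c • Finsupp.single A 1 := by
  classical
  have hsd : ∀ i : Fin q, (A \ {i}).sup D ≤ A.sup D := fun i => Finset.sup_mono sdiff_subset
  have hins : ∀ (j : Fin q) (B : Finset (Fin q)), (insert j B).sup D = D j ⊔ B.sup D :=
    fun j B => Finset.sup_insert
  have hsupub : ∀ (j : Fin q) (B : Finset (Fin q)), (insert j B).sup D ≤ D j + B.sup D := by
    intro j B; rw [hins]; exact sup_le le_self_add le_add_self
  -- expand first summand
  have h1 : taylorD k n q D (sigTerm k n q D c A Aᶜ)
      = (∑ j ∈ Aᶜ, Finsupp.single A (c j * monomial (D j) 1))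
        + ∑ j ∈ Aᶜ, ∑ i ∈ A, Finsupp.single ((insert j A) \ {i})
            (((fsign {j} A : MvPolynomial (Fin n) k) * c j *
              monomial (D j + A.sup D - (insert j A).sup D) 1) *
             ((fsign {i} ((insert j A) \ {i}) : MvPolynomial (Fin n) k) *
              monomial ((insert j A).sup D - ((insert j A) \ {i}).sup D) 1)) := by
    rw [sigTerm, map_sum, ← Finset.sum_add_distrib]
    refine Finset.sum_congr rfl fun j hj => ?_
    have hjA : j ∉ A := by simpa using hj
    rw [taylorD_single, Finset.sum_insert hjA]
    congr 1
    have hset : (insert j A) \ {j} = A := by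
      rw [sdiff_singleton_eq_erase, erase_insert hjA]
    rw [hset]
    congr 1
    have hm : monomial (D j + A.sup D - (insert j A).sup D) (1 : k) *
        monomial ((insert j A).sup D - A.sup D) 1 = monomial (D j) 1 := by
      rw [mono_mul_mono,
        tsub_add_tsub_cancel (hsupub j A)
          (by rw [hins]; exact le_sup_right : A.sup D ≤ (insert j A).sup D),
        add_tsub_cancel_right]
    calc ((fsign {j} A : MvPolynomial (Fin n) k) * c j *
            monomial (D j + A.sup D - (insert j A).sup D) 1) *
          ((fsign {j} A : MvPolynomial (Fin n) k) *
            monomial ((insert j A).sup D - A.sup D) 1)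
        = ((fsign {j} A : MvPolynomial (Fin n) k) * (fsign {j} A : MvPolynomial (Fin n) k)) *
            (monomial (D j + A.sup D - (insert j A).sup D) (1:k) *
              monomial ((insert j A).sup D - A.sup D) 1) * c j := by ring
      _ = c j * monomial (D j) 1 := by rw [cast_sq hjA, hm, one_mul, mul_comm]
  -- expand second summand
  have h2 : (∑ i ∈ A, ((fsign {i} (A \ {i}) : MvPolynomial (Fin n) k) *
          monomial (A.sup D - (A \ {i}).sup D) (1 : k)) • sigTerm k n q D c (A \ {i}) (A \ {i})ᶜ)
      = (∑ i ∈ A, Finsupp.single A (c i * monomial (D i) 1))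
        + ∑ i ∈ A, ∑ j ∈ Aᶜ, Finsupp.single (insert j (A \ {i}))
            (((fsign {i} (A \ {i}) : MvPolynomial (Fin n) k) *
               monomial (A.sup D - (A \ {i}).sup D) 1) *
             ((fsign {j} (A \ {i}) : MvPolynomial (Fin n) k) * c j *
              monomial (D j + (A \ {i}).sup D - (insert j (A \ {i})).sup D) 1)) := by
    rw [← Finset.sum_add_distrib]
    refine Finset.sum_congr rfl fun i hi => ?_
    have hiA : i ∈ A := hi
    have hcompl : (A \ {i})ᶜ = insert i Aᶜ := by
      ext x; simp only [mem_compl, mem_sdiff, mem_insert, mem_singleton]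
      by_cases hx : x = i <;> simp [hx, hiA]
    rw [sigTerm, Finset.smul_sum, hcompl, Finset.sum_insert (by simp [hiA])]
    congr 1
    · have hset : insert i (A \ {i}) = A := by
        rw [sdiff_singleton_eq_erase, insert_erase hiA]
      rw [Finsupp.smul_single', hset]
      congr 1
      have hm : monomial (A.sup D - (A \ {i}).sup D) (1:k) *
          monomial (D i + (A \ {i}).sup D - A.sup D) 1 = monomial (D i) 1 := by
        have hAle : A.sup D ≤ D i + (A \ {i}).sup D := by
          calc A.sup D = (insert i (A \ {i})).sup D := by rw [hset]
            _ ≤ _ := hsupub i _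
        rw [mono_mul_mono, tsub_helper _ _ _ _ (hsd i) hAle, add_tsub_cancel_right]
      calc ((fsign {i} (A \ {i}) : MvPolynomial (Fin n) k) *
              monomial (A.sup D - (A \ {i}).sup D) 1) *
            ((fsign {i} (A \ {i}) : MvPolynomial (Fin n) k) * c i *
              monomial (D i + (A \ {i}).sup D - A.sup D) 1)
          = ((fsign {i} (A \ {i}) : MvPolynomial (Fin n) k) *
              (fsign {i} (A \ {i}) : MvPolynomial (Fin n) k)) *
            (monomial (A.sup D - (A \ {i}).sup D) (1:k) *
              monomial (D i + (A \ {i}).sup D - A.sup D) 1) * c i := by ring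
        _ = c i * monomial (D i) 1 := by rw [cast_sq (by simp), hm, one_mul, mul_comm]
    · exact Finset.sum_congr rfl fun j _ => Finsupp.smul_single' _ _ _
  rw [h1, h2]
  -- cross terms cancel
  have h3 : (∑ j ∈ Aᶜ, ∑ i ∈ A, Finsupp.single ((insert j A) \ {i})
            (((fsign {j} A : MvPolynomial (Fin n) k) * c j *
              monomial (D j + A.sup D - (insert j A).sup D) 1) *
             ((fsign {i} ((insert j A) \ {i}) : MvPolynomial (Fin n) k) *
              monomial ((insert j A).sup D - ((insert j A) \ {i}).sup D) 1)))
      + (∑ i ∈ A, ∑ j ∈ Aᶜ, Finsupp.single (insert j (A \ {i}))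
            (((fsign {i} (A \ {i}) : MvPolynomial (Fin n) k) *
               monomial (A.sup D - (A \ {i}).sup D) 1) *
             ((fsign {j} (A \ {i}) : MvPolynomial (Fin n) k) * c j *
              monomial (D j + (A \ {i}).sup D - (insert j (A \ {i})).sup D) 1)))
      = 0 := by
    rw [Finset.sum_comm (s := A), ← Finset.sum_add_distrib]
    refine Finset.sum_eq_zero fun j hj => ?_
    rw [← Finset.sum_add_distrib]
    refine Finset.sum_eq_zero fun i hi => ?_
    have hjA : j ∉ A := by simpa using hj
    have hiA : i ∈ A := hi
    have hij : i ≠ j := fun h => hjA (h ▸ hiA)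
    have hiC : i ∉ A \ {i} := by simp
    have hjC : j ∉ A \ {i} := by simp [hjA]
    have hset : insert j (A \ {i}) = (insert j A) \ {i} := by
      ext x; simp only [mem_insert, mem_sdiff, mem_singleton]
      constructor
      · rintro (rfl | ⟨hx, hne⟩)
        · exact ⟨Or.inl rfl, hij.symm⟩
        · exact ⟨Or.inr hx, hne⟩
      · rintro ⟨(rfl | hx), hne⟩
        · exact Or.inl rfl
        · exact Or.inr ⟨hx, hne⟩
    have hsetA : insert i (A \ {i}) = A := by
      rw [sdiff_singleton_eq_erase, insert_erase hiA]
    have hm1 : monomial (D j + A.sup D - (insert j A).sup D) (1:k) *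
        monomial ((insert j A).sup D - ((insert j A) \ {i}).sup D) 1
        = monomial (D j + A.sup D - ((insert j A) \ {i}).sup D) 1 := by
      rw [mono_mul_mono,
        tsub_add_tsub_cancel (hsupub j A)
          (Finset.sup_mono sdiff_subset : ((insert j A) \ {i}).sup D ≤ (insert j A).sup D)]
    have hm2 : monomial (A.sup D - (A \ {i}).sup D) (1:k) *
        monomial (D j + (A \ {i}).sup D - ((insert j A) \ {i}).sup D) 1
        = monomial (D j + A.sup D - ((insert j A) \ {i}).sup D) 1 := by
      rw [mono_mul_mono, ← hset, tsub_helper _ _ _ _ (hsd i) (hsupub j (A \ {i}))]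
    rw [hset, ← Finsupp.single_add]
    have hcoef : (((fsign {j} A : MvPolynomial (Fin n) k) * c j *
              monomial (D j + A.sup D - (insert j A).sup D) 1) *
             ((fsign {i} ((insert j A) \ {i}) : MvPolynomial (Fin n) k) *
              monomial ((insert j A).sup D - ((insert j A) \ {i}).sup D) 1))
        + (((fsign {i} (A \ {i}) : MvPolynomial (Fin n) k) *
               monomial (A.sup D - (A \ {i}).sup D) 1) *
             ((fsign {j} (A \ {i}) : MvPolynomial (Fin n) k) * c j *
              monomial (D j + (A \ {i}).sup D - ((insert j A) \ {i}).sup D) 1)) = 0 := by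
      have e1 : ((fsign {j} A : MvPolynomial (Fin n) k) * c j *
              monomial (D j + A.sup D - (insert j A).sup D) 1) *
             ((fsign {i} ((insert j A) \ {i}) : MvPolynomial (Fin n) k) *
              monomial ((insert j A).sup D - ((insert j A) \ {i}).sup D) 1)
          = ((fsign {j} A : MvPolynomial (Fin n) k) *
             (fsign {i} ((insert j A) \ {i}) : MvPolynomial (Fin n) k)) * c j *
            monomial (D j + A.sup D - ((insert j A) \ {i}).sup D) 1 := by
        rw [← hm1]; ring
      have e2 : ((fsign {i} (A \ {i}) : MvPolynomial (Fin n) k) *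
               monomial (A.sup D - (A \ {i}).sup D) 1) *
             ((fsign {j} (A \ {i}) : MvPolynomial (Fin n) k) * c j *
              monomial (D j + (A \ {i}).sup D - ((insert j A) \ {i}).sup D) 1)
          = ((fsign {i} (A \ {i}) : MvPolynomial (Fin n) k) *
             (fsign {j} (A \ {i}) : MvPolynomial (Fin n) k)) * c j *
            monomial (D j + A.sup D - ((insert j A) \ {i}).sup D) 1 := by
        rw [← hm2]; ring
      rw [e1, e2, ← add_mul, ← add_mul]
      have hc : ((fsign {j} A : MvPolynomial (Fin n) k) *
             (fsign {i} ((insert j A) \ {i}) : MvPolynomial (Fin n) k))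
          + ((fsign {i} (A \ {i}) : MvPolynomial (Fin n) k) *
             (fsign {j} (A \ {i}) : MvPolynomial (Fin n) k)) = 0 := by
        have hc' := cast_core (k := k) (n := n) hij hiC hjC
        rw [hsetA, hset] at hc'
        exact hc'
      rw [hc, zero_mul, zero_mul]
    rw [hcoef, Finsupp.single_zero]
  rw [add_add_add_comm, h3, add_zero, Finsupp.smul_single', mul_one, aElt]
  have hmap : Finsupp.single A (∑ j : Fin q, c j * monomial (D j) (1:k))
      = ∑ j : Fin q, Finsupp.single A (c j * monomial (D j) (1:k)) :=
    map_sum (Finsupp.singleAddHom A) _ _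
  rw [hmap, ← Finset.sum_compl_add_sum A (fun j => Finsupp.single A (c j * monomial (D j) (1:k)))]

end ModuleHelpers


lemma insert_sdiff_swap {α : Type*} [DecidableEq α] {i j : α} (h : j ≠ i) (X : Finset α) :
    insert j (X \ {i}) = (insert j X) \ {i} := by
  ext x
  simp only [mem_insert, mem_sdiff, mem_singleton]
  constructor
  · rintro (rfl | ⟨hx, hne⟩)
    · exact ⟨Or.inl rfl, h⟩
    · exact ⟨Or.inr hx, hne⟩
  · rintro ⟨(rfl | hx), hne⟩
    · exact Or.inl rfl
    · exact Or.inr ⟨hx, hne⟩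

lemma sdiff_sdiff_swap' {α : Type*} [DecidableEq α] (X : Finset α) (a b : α) :
    (X \ {a}) \ {b} = (X \ {b}) \ {a} := by
  ext x; simp only [mem_sdiff, mem_singleton]; tauto


section SignLemmas

variable {α : Type*} [LinearOrder α] [DecidableEq α]

lemma fsign_core_pivot {i i' p : α} {C : Finset α} (hii' : i ≠ i')
    (hi : i ∉ C) (hi' : i' ∉ C) (hp : p ∉ C) (hip : i < p) (hi'p : i' < p) :
    fsign {i} (insert i' C) * fsign {i'} (insert p C)
      + fsign {i'} (insert i C) * fsign {i} (insert p C) = 0 := by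
  have hn1 : i ∉ insert i' C := by
    simp only [mem_insert]; rintro (rfl | h); exacts [hii' rfl, hi h]
  have hn2 : i' ∉ insert p C := by
    simp only [mem_insert]; rintro (rfl | h); exacts [lt_irrefl _ hi'p, hi' h]
  have hn3 : i' ∉ insert i C := by
    simp only [mem_insert]; rintro (rfl | h); exacts [hii' rfl, hi' h]
  have hn4 : i ∉ insert p C := by
    simp only [mem_insert]; rintro (rfl | h); exacts [lt_irrefl _ hip, hi h]
  rw [fsign_singleton i (insert i' C), fsign_singleton i' (insert p C),
    fsign_singleton i' (insert i C), fsign_singleton i (insert p C),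
    if_neg hn1, if_neg hn2, if_neg hn3, if_neg hn4,
    nuF_insert hi' i, nuF_insert hp i', nuF_insert hi i', nuF_insert hp i,
    ← pow_add, ← pow_add]
  apply neg_one_pow_add_eq_zero
  rw [if_neg (not_lt_of_gt hi'p), if_neg (not_lt_of_gt hip)]
  rcases lt_or_gt_of_ne hii' with h | h
  · rw [if_neg (not_lt_of_gt h), if_pos h]; omega
  · rw [if_pos h, if_neg (not_lt_of_gt h)]; omega

lemma fsign_E4 {t i i₀ p : α} {G : Finset α}
    (htG : t ∈ G) (hiG : i ∈ G) (hi₀G : i₀ ∈ G) (hpG : p ∉ G)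
    (htp : t < p) (hip : i < p) (hpi₀ : p < i₀) :
    fsign {t} (G \ {t}) * fsign {i} (G \ {i}) * fsign {i₀} (insert p ((G \ {i}) \ {i₀}))
      + fsign {i₀} ((G \ {t}) \ {i₀}) * fsign {t} ((G \ {t}) \ {i₀}) *
        fsign {i} ((G \ {i₀}) \ {i}) = 0 := by
  have hti₀ : t ≠ i₀ := ne_of_lt (htp.trans hpi₀)
  have hii₀ : i ≠ i₀ := ne_of_lt (hip.trans hpi₀)
  have hpi : p ≠ i := ne_of_gt hip
  have hpt : p ≠ t := ne_of_gt htp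
  have h1 : i₀ ∉ (G \ {i}) \ {i₀} := by simp
  have h2 : p ∉ (G \ {i}) \ {i₀} := by simp [hpG]
  have h3 : t ∉ G \ {t} := by simp
  have h4 : i ∉ G \ {i} := by simp
  have h5 : i₀ ∉ (G \ {t}) \ {i₀} := by simp
  have h6 : t ∉ (G \ {t}) \ {i₀} := by simp
  have h7 : i ∉ (G \ {i₀}) \ {i} := by simp
  have h8 : i₀ ∉ insert p ((G \ {i}) \ {i₀}) := by
    simp only [mem_insert]
    rintro (rfl | h)
    · exact lt_irrefl _ hpi₀
    · exact h1 h
  rw [fsign_singleton t (G \ {t}), fsign_singleton i (G \ {i}), fsign_singleton i₀ (insert p ((G \ {i}) \ {i₀})),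
    fsign_singleton i₀ ((G \ {t}) \ {i₀}), fsign_singleton t ((G \ {t}) \ {i₀}),
    fsign_singleton i ((G \ {i₀}) \ {i}),
    if_neg h3, if_neg h4, if_neg h8, if_neg h5, if_neg h6, if_neg h7,
    ← pow_add, ← pow_add, ← pow_add, ← pow_add]
  apply neg_one_pow_add_eq_zero
  -- abbreviations
  have e8 : nuF i₀ (insert p ((G \ {i}) \ {i₀})) = nuF i₀ ((G \ {i}) \ {i₀}) + 1 := by
    rw [nuF_insert h2, if_pos hpi₀]
  -- ν t ((G\t)\i₀) = ν t (G\t)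
  have e6 : nuF t (G \ {t}) = nuF t ((G \ {t}) \ {i₀}) := by
    have : i₀ ∈ G \ {t} := by simp [hi₀G, hti₀.symm]
    rw [nuF_sdiff this t, if_neg (not_lt_of_gt (htp.trans hpi₀)), add_zero]
  -- ν i ((G\i₀)\i) = ν i (G\i)
  have e7 : nuF i (G \ {i}) = nuF i ((G \ {i₀}) \ {i}) := by
    have h9 : i₀ ∈ G \ {i} := by simp [hi₀G, hii₀.symm]
    have h10 : (G \ {i}) \ {i₀} = (G \ {i₀}) \ {i} := sdiff_sdiff_swap' G i i₀
    rw [nuF_sdiff h9 i, if_neg (not_lt_of_gt (hip.trans hpi₀)), add_zero, h10]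
  -- ν i₀ ((G\i)\i₀) = ν i₀ ((G\t)\i₀)  (both equal ν i₀ (G\i₀) - 1)
  have e9 : nuF i₀ ((G \ {i}) \ {i₀}) + 1 = nuF i₀ (G \ {i₀}) := by
    have h9 : i ∈ G \ {i₀} := by simp [hiG, hii₀]
    have h10 : (G \ {i}) \ {i₀} = (G \ {i₀}) \ {i} := sdiff_sdiff_swap' G i i₀
    rw [h10, nuF_sdiff h9 i₀, if_pos (hip.trans hpi₀)]
  have e10 : nuF i₀ ((G \ {t}) \ {i₀}) + 1 = nuF i₀ (G \ {i₀}) := by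
    have h9 : t ∈ G \ {i₀} := by simp [htG, hti₀]
    have h10 : (G \ {t}) \ {i₀} = (G \ {i₀}) \ {t} := sdiff_sdiff_swap' G t i₀
    rw [h10, nuF_sdiff h9 i₀, if_pos (htp.trans hpi₀)]
  omega

end SignLemmas

section LemBHelpers

variable {k : Type*} [Field k] {n q : ℕ}

lemma sum_antisymm {ι M : Type*} [DecidableEq ι] [AddCommMonoid M] (s : Finset ι)
    (w : ι → ι → M) (h : ∀ i ∈ s, ∀ j ∈ s, i ≠ j → w i j + w j i = 0) :
    ∑ i ∈ s, ∑ j ∈ s \ {i}, w i j = 0 := by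
  have hrw : ∑ i ∈ s, ∑ j ∈ s \ {i}, w i j
      = ∑ x ∈ (s ×ˢ s).filter (fun x => x.2 ≠ x.1), w x.1 x.2 := by
    rw [Finset.sum_filter, Finset.sum_product]
    refine Finset.sum_congr rfl fun i _ => ?_
    rw [← Finset.sum_filter, sdiff_singleton_eq_erase, ← Finset.filter_ne']
  rw [hrw]
  refine Finset.sum_involution (fun x _ => x.swap) ?_ ?_ ?_ ?_
  · intro x hx
    simp only [mem_filter, mem_product] at hx
    exact h x.1 hx.1.1 x.2 hx.1.2 (fun he => hx.2 he.symm)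
  · intro x hx _
    simp only [mem_filter, mem_product] at hx
    intro he
    exact hx.2 (congrArg Prod.fst he)
  · intro x hx
    simp only [mem_filter, mem_product] at hx ⊢
    exact ⟨⟨hx.1.2, hx.1.1⟩, fun he => hx.2 he.symm⟩
  · intro x _; rfl

lemma Lset_card {l : ℕ} (hq : l < q) : (Lset q l).card = l := by
  have : Lset q l = Finset.map (Fin.castLEEmb hq.le) Finset.univ := by
    ext x
    simp only [Lset, Finset.mem_filter, Finset.mem_univ, true_and, Finset.mem_map]
    constructor
    · intro h; exact ⟨⟨x, h⟩, by simp [Fin.castLEEmb]⟩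
    · rintro ⟨y, -, rfl⟩; simpa [Fin.castLEEmb] using y.isLt
  rw [this, Finset.card_map, Finset.card_univ, Fintype.card_fin]

lemma mem_Lset_iff {l : ℕ} {x : Fin q} : x ∈ Lset q l ↔ (x : ℕ) < l := by
  simp [Lset]

lemma lt_pivElt_iff {l : ℕ} (hq : l < q) {x : Fin q} : x < pivElt q l hq ↔ x ∈ Lset q l := by
  rw [mem_Lset_iff, Fin.lt_def]; rfl

lemma nuF_pivElt {l : ℕ} (hq : l < q) (X : Finset (Fin q)) :
    nuF (pivElt q l hq) X = (X ∩ Lset q l).card := by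
  rw [nuF, ← Finset.filter_mem_eq_inter]
  have : X.filter (· < pivElt q l hq) = X.filter (· ∈ Lset q l) :=
    Finset.filter_congr fun x _ => by simpa using lt_pivElt_iff (q := q) hq (x := x)
  rw [this]

/-- analogue of the `j = t` term of `sigTerm`. -/
def tterm (D : Fin q → (Fin n →₀ ℕ)) (c : Fin q → MvPolynomial (Fin n) k)
    (t : Fin q) (C : Finset (Fin q)) : TotMod k n q :=
  Finsupp.single (insert t C)
    ((fsign {t} C : MvPolynomial (Fin n) k) * c t *
      monomial (D t + C.sup D - (insert t C).sup D) (1 : k))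

lemma pow_cancel {l : ℕ} (hl : 1 ≤ l) (x : MvPolynomial (Fin n) k) :
    (-1 : MvPolynomial (Fin n) k) ^ (l + 1) * ((((-1 : ℤ) ^ (l - 1) : ℤ) : MvPolynomial (Fin n) k) * x)
      = x := by
  push_cast
  rw [← mul_assoc, ← pow_add]
  have h2 : l + 1 + (l - 1) = 2 * l := by omega
  rw [h2, pow_mul]
  norm_num

set_option maxHeartbeats 1000000 in
lemma stepR (l : ℕ) (hq : l < q) (D : Fin q → (Fin n →₀ ℕ))
    (c : Fin q → MvPolynomial (Fin n) k) (A : Finset (Fin q)) (t : Fin q)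
    (hA : Lset q l \ A = {t}) :
    taylorD k n q D (tterm D c t A)
      + ∑ i ∈ A \ Lset q l, ((fsign {i} (A \ {i}) : MvPolynomial (Fin n) k) *
          monomial (A.sup D - (A \ {i}).sup D) (1 : k)) • tterm D c t (A \ {i})
    = Finsupp.single A (c t * monomial (D t) (1 : k))
      + ∑ i ∈ A ∩ Lset q l, Finsupp.single (insert t A \ {i})
          ((fsign {t} A : MvPolynomial (Fin n) k) * c t *
            ((fsign {i} (insert t A \ {i}) : MvPolynomial (Fin n) k) *
              monomial (D t + A.sup D - (insert t A \ {i}).sup D) (1 : k))) := by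
  classical
  have htLA : t ∈ Lset q l \ A := hA ▸ mem_singleton_self t
  have htL : t ∈ Lset q l := (mem_sdiff.mp htLA).1
  have htA : t ∉ A := (mem_sdiff.mp htLA).2
  have hsupGA : A.sup D ≤ (insert t A).sup D := Finset.sup_mono (subset_insert t A)
  have hGub : (insert t A).sup D ≤ D t + A.sup D := by
    rw [Finset.sup_insert]; exact sup_le le_self_add le_add_self
  rw [tterm, taylorD_single, Finset.sum_insert htA]
  have hsetA : insert t A \ {t} = A := by
    rw [sdiff_singleton_eq_erase, erase_insert htA]
  rw [hsetA]
  have e1 : Finsupp.single A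
      (((fsign {t} A : MvPolynomial (Fin n) k) * c t *
          monomial (D t + A.sup D - (insert t A).sup D) 1) *
        ((fsign {t} A : MvPolynomial (Fin n) k) *
          monomial ((insert t A).sup D - A.sup D) 1))
      = Finsupp.single A (c t * monomial (D t) (1 : k)) := by
    congr 1
    have hm : monomial (D t + A.sup D - (insert t A).sup D) (1:k) *
        monomial ((insert t A).sup D - A.sup D) 1 = monomial (D t) 1 := by
      rw [mono_mul_mono, tsub_add_tsub_cancel hGub hsupGA, add_tsub_cancel_right]
    calc ((fsign {t} A : MvPolynomial (Fin n) k) * c t *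
          monomial (D t + A.sup D - (insert t A).sup D) 1) *
        ((fsign {t} A : MvPolynomial (Fin n) k) *
          monomial ((insert t A).sup D - A.sup D) 1)
        = ((fsign {t} A : MvPolynomial (Fin n) k) * (fsign {t} A : MvPolynomial (Fin n) k)) *
            (monomial (D t + A.sup D - (insert t A).sup D) (1:k) *
              monomial ((insert t A).sup D - A.sup D) 1) * c t := by ring
      _ = c t * monomial (D t) 1 := by rw [cast_sq htA, hm, one_mul, mul_comm]
  rw [e1]
  rw [← Finset.sum_inter_add_sum_sdiff A (Lset q l) _]
  have e2 : ∀ i ∈ A ∩ Lset q l,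
      Finsupp.single (insert t A \ {i})
        (((fsign {t} A : MvPolynomial (Fin n) k) * c t *
            monomial (D t + A.sup D - (insert t A).sup D) 1) *
          ((fsign {i} (insert t A \ {i}) : MvPolynomial (Fin n) k) *
            monomial ((insert t A).sup D - (insert t A \ {i}).sup D) 1))
      = Finsupp.single (insert t A \ {i})
          ((fsign {t} A : MvPolynomial (Fin n) k) * c t *
            ((fsign {i} (insert t A \ {i}) : MvPolynomial (Fin n) k) *
              monomial (D t + A.sup D - (insert t A \ {i}).sup D) (1 : k))) := by
    intro i _
    congr 1
    have hm : monomial (D t + A.sup D - (insert t A).sup D) (1:k) *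
        monomial ((insert t A).sup D - (insert t A \ {i}).sup D) 1
        = monomial (D t + A.sup D - (insert t A \ {i}).sup D) 1 := by
      rw [mono_mul_mono, tsub_add_tsub_cancel hGub (Finset.sup_mono sdiff_subset)]
    rw [← hm]; ring
  rw [Finset.sum_congr rfl e2]
  have e3 : (∑ i ∈ A \ Lset q l, Finsupp.single (insert t A \ {i})
        (((fsign {t} A : MvPolynomial (Fin n) k) * c t *
            monomial (D t + A.sup D - (insert t A).sup D) 1) *
          ((fsign {i} (insert t A \ {i}) : MvPolynomial (Fin n) k) *
            monomial ((insert t A).sup D - (insert t A \ {i}).sup D) 1)))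
      + ∑ i ∈ A \ Lset q l, ((fsign {i} (A \ {i}) : MvPolynomial (Fin n) k) *
          monomial (A.sup D - (A \ {i}).sup D) (1 : k)) • tterm D c t (A \ {i}) = 0 := by
    rw [← Finset.sum_add_distrib]
    refine Finset.sum_eq_zero fun i hi => ?_
    have hiA : i ∈ A := (mem_sdiff.mp hi).1
    have hiL : i ∉ Lset q l := (mem_sdiff.mp hi).2
    have hti : t ≠ i := fun h => hiL (h ▸ htL)
    have hswap : insert t (A \ {i}) = insert t A \ {i} := insert_sdiff_swap hti A
    rw [tterm, Finsupp.smul_single', hswap, ← Finsupp.single_add]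
    have hiC : i ∉ A \ {i} := by simp
    have htC : t ∉ A \ {i} := by simp [htA]
    have hit : i ≠ t := hti.symm
    have hsetA2 : insert i (A \ {i}) = A := by
      rw [sdiff_singleton_eq_erase, insert_erase hiA]
    have hm1 : monomial (D t + A.sup D - (insert t A).sup D) (1:k) *
        monomial ((insert t A).sup D - (insert t A \ {i}).sup D) 1
        = monomial (D t + A.sup D - (insert t A \ {i}).sup D) 1 := by
      rw [mono_mul_mono, tsub_add_tsub_cancel hGub (Finset.sup_mono sdiff_subset)]
    have hm2 : monomial (A.sup D - (A \ {i}).sup D) (1:k) *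
        monomial (D t + (A \ {i}).sup D - (insert t A \ {i}).sup D) 1
        = monomial (D t + A.sup D - (insert t A \ {i}).sup D) 1 := by
      rw [mono_mul_mono, ← hswap]
      rw [tsub_helper _ _ _ _ (Finset.sup_mono sdiff_subset)
        (by rw [Finset.sup_insert]; exact sup_le le_self_add le_add_self)]
    have hc : (fsign {t} A : MvPolynomial (Fin n) k) *
          (fsign {i} (insert t A \ {i}) : MvPolynomial (Fin n) k)
        + (fsign {i} (A \ {i}) : MvPolynomial (Fin n) k) *
          (fsign {t} (A \ {i}) : MvPolynomial (Fin n) k) = 0 := by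
      have hc' := cast_core (k := k) (n := n) hit hiC htC
      rw [hsetA2, hswap] at hc'
      exact hc'
    have : (((fsign {t} A : MvPolynomial (Fin n) k) * c t *
            monomial (D t + A.sup D - (insert t A).sup D) 1) *
          ((fsign {i} (insert t A \ {i}) : MvPolynomial (Fin n) k) *
            monomial ((insert t A).sup D - (insert t A \ {i}).sup D) 1))
        + ((fsign {i} (A \ {i}) : MvPolynomial (Fin n) k) *
            monomial (A.sup D - (A \ {i}).sup D) (1 : k)) *
          ((fsign {t} (A \ {i}) : MvPolynomial (Fin n) k) * c t *
            monomial (D t + (A \ {i}).sup D - (insert t A \ {i}).sup D) 1) = 0 := by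
      have ee1 : ((fsign {t} A : MvPolynomial (Fin n) k) * c t *
            monomial (D t + A.sup D - (insert t A).sup D) 1) *
          ((fsign {i} (insert t A \ {i}) : MvPolynomial (Fin n) k) *
            monomial ((insert t A).sup D - (insert t A \ {i}).sup D) 1)
          = ((fsign {t} A : MvPolynomial (Fin n) k) *
              (fsign {i} (insert t A \ {i}) : MvPolynomial (Fin n) k)) * c t *
            monomial (D t + A.sup D - (insert t A \ {i}).sup D) 1 := by
        rw [← hm1]; ring
      have ee2 : ((fsign {i} (A \ {i}) : MvPolynomial (Fin n) k) *
            monomial (A.sup D - (A \ {i}).sup D) (1 : k)) *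
          ((fsign {t} (A \ {i}) : MvPolynomial (Fin n) k) * c t *
            monomial (D t + (A \ {i}).sup D - (insert t A \ {i}).sup D) 1)
          = ((fsign {i} (A \ {i}) : MvPolynomial (Fin n) k) *
              (fsign {t} (A \ {i}) : MvPolynomial (Fin n) k)) * c t *
            monomial (D t + A.sup D - (insert t A \ {i}).sup D) 1 := by
        rw [← hm2]; ring
      rw [ee1, ee2, ← add_mul, ← add_mul, hc, zero_mul, zero_mul]
    rw [this, Finsupp.single_zero]
  have e3' : (∑ i ∈ A \ Lset q l, Finsupp.single (insert t A \ {i})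
        (((fsign {t} A : MvPolynomial (Fin n) k) * c t *
            monomial (D t + A.sup D - (insert t A).sup D) 1) *
          ((fsign {i} (insert t A \ {i}) : MvPolynomial (Fin n) k) *
            monomial ((insert t A).sup D - (insert t A \ {i}).sup D) 1)))
      = - ∑ i ∈ A \ Lset q l, ((fsign {i} (A \ {i}) : MvPolynomial (Fin n) k) *
          monomial (A.sup D - (A \ {i}).sup D) (1 : k)) • tterm D c t (A \ {i}) :=
    eq_neg_of_add_eq_zero_left e3
  rw [e3']
  abel

set_option maxHeartbeats 4000000 in
lemma stepL (l : ℕ) (hq : l < q) (hl : 2 ≤ l) (D : Fin q → (Fin n →₀ ℕ))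
    (c : Fin q → MvPolynomial (Fin n) k) (A : Finset (Fin q)) (t : Fin q)
    (hA : Lset q l \ A = {t}) (hpiv : pivElt q l hq ∉ A)
    (hgap : D (pivElt q l hq) ≤ (Lset q l).sup D) :
    taylorD k n q D (sigCorr k n q l hq D c A t)
      + ∑ i ∈ A \ Lset q l, ((fsign {i} (A \ {i}) : MvPolynomial (Fin n) k) *
          monomial (A.sup D - (A \ {i}).sup D) (1 : k)) • sigCorr k n q l hq D c (A \ {i}) t
    = Finsupp.single A (c t * monomial (D t) (1 : k))
      + ∑ i ∈ A ∩ Lset q l, Finsupp.single (insert t A \ {i})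
          ((fsign {t} A : MvPolynomial (Fin n) k) * c t *
            ((fsign {i} (insert t A \ {i}) : MvPolynomial (Fin n) k) *
              monomial (D t + A.sup D - (insert t A \ {i}).sup D) (1 : k))) := by
  classical
  have htLA : t ∈ Lset q l \ A := hA ▸ mem_singleton_self t
  have htL : t ∈ Lset q l := (mem_sdiff.mp htLA).1
  have htA : t ∉ A := (mem_sdiff.mp htLA).2
  have hpL : pivElt q l hq ∉ Lset q l := by simp [mem_Lset_iff, pivElt]
  have htp : t ≠ pivElt q l hq := fun h => hpL (h ▸ htL)
  have hpG : pivElt q l hq ∉ insert t A := by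
    simp only [mem_insert]
    rintro (h | h)
    · exact htp h.symm
    · exact hpiv h
  have hLG : Lset q l ⊆ insert t A := by
    intro x hx
    by_cases hxA : x ∈ A
    · exact mem_insert_of_mem hxA
    · have : x ∈ Lset q l \ A := mem_sdiff.mpr ⟨hx, hxA⟩
      rw [hA, mem_singleton] at this
      rw [this]; exact mem_insert_self _ _
  have htAL : t ∉ A ∩ Lset q l := by simp [htA]
  have hALins : insert t (A ∩ Lset q l) = Lset q l := by
    ext x
    simp only [mem_insert, mem_inter]
    constructor
    · rintro (rfl | ⟨_, h⟩)
      · exact htL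
      · exact h
    · intro hx
      by_cases hxA : x ∈ A
      · exact Or.inr ⟨hxA, hx⟩
      · have : x ∈ Lset q l \ A := mem_sdiff.mpr ⟨hx, hxA⟩
        rw [hA, mem_singleton] at this
        exact Or.inl this
  have hcardAL : (A ∩ Lset q l).card = l - 1 := by
    have h1 := Finset.card_insert_of_notMem htAL
    rw [hALins, Lset_card hq] at h1
    omega
  have hsupGA : A.sup D ≤ (insert t A).sup D := Finset.sup_mono (subset_insert t A)
  have hGub : (insert t A).sup D ≤ D t + A.sup D := by
    rw [Finset.sup_insert]; exact sup_le le_self_add le_add_self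
  have hDpG : D (pivElt q l hq) ≤ (insert t A).sup D := le_trans hgap (Finset.sup_mono hLG)
  have hBiBound : ∀ i : Fin q,
      (insert (pivElt q l hq) (insert t A \ {i})).sup D ≤ D t + A.sup D := by
    intro i
    rw [Finset.sup_insert]
    exact sup_le (hDpG.trans hGub) ((Finset.sup_mono sdiff_subset).trans hGub)
  have hsetAt : insert t A \ {t} = A := by
    rw [sdiff_singleton_eq_erase, erase_insert htA]
  have htplt : t < pivElt q l hq := (lt_pivElt_iff hq).mpr htL
  -- step 1 : expand taylorD (sigCorr A t)
  have hterm : ∀ i ∈ Lset q l,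
      taylorD k n q D (Finsupp.single ((insert (pivElt q l hq) (insert t A)) \ {i})
        ((-1 : MvPolynomial (Fin n) k) ^ (l + 1) *
          (fsign {t} A : MvPolynomial (Fin n) k) * c t *
          (fsign {i} (insert t A \ {i}) : MvPolynomial (Fin n) k) *
          monomial (D t + A.sup D - ((insert (pivElt q l hq) (insert t A)) \ {i}).sup D)
            (1 : k)))
      = Finsupp.single (insert t A \ {i})
          (((-1 : MvPolynomial (Fin n) k) ^ (l + 1) *
            (fsign {t} A : MvPolynomial (Fin n) k) * c t *
            (fsign {i} (insert t A \ {i}) : MvPolynomial (Fin n) k) *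
            monomial (D t + A.sup D - (insert (pivElt q l hq) (insert t A \ {i})).sup D) 1) *
           ((fsign {pivElt q l hq} (insert t A \ {i}) : MvPolynomial (Fin n) k) *
            monomial ((insert (pivElt q l hq) (insert t A \ {i})).sup D -
              (insert t A \ {i}).sup D) 1))
        + ((∑ i' ∈ Lset q l \ {i}, Finsupp.single
              ((insert (pivElt q l hq) (insert t A \ {i})) \ {i'})
              (((-1 : MvPolynomial (Fin n) k) ^ (l + 1) *
                (fsign {t} A : MvPolynomial (Fin n) k) * c t *
                (fsign {i} (insert t A \ {i}) : MvPolynomial (Fin n) k) *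
                monomial (D t + A.sup D -
                  (insert (pivElt q l hq) (insert t A \ {i})).sup D) 1) *
               ((fsign {i'} ((insert (pivElt q l hq) (insert t A \ {i})) \ {i'}) :
                   MvPolynomial (Fin n) k) *
                monomial ((insert (pivElt q l hq) (insert t A \ {i})).sup D -
                  ((insert (pivElt q l hq) (insert t A \ {i})) \ {i'}).sup D) 1)))
          + ∑ i' ∈ A \ Lset q l, Finsupp.single
              ((insert (pivElt q l hq) (insert t A \ {i})) \ {i'})
              (((-1 : MvPolynomial (Fin n) k) ^ (l + 1) *
                (fsign {t} A : MvPolynomial (Fin n) k) * c t *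
                (fsign {i} (insert t A \ {i}) : MvPolynomial (Fin n) k) *
                monomial (D t + A.sup D -
                  (insert (pivElt q l hq) (insert t A \ {i})).sup D) 1) *
               ((fsign {i'} ((insert (pivElt q l hq) (insert t A \ {i})) \ {i'}) :
                   MvPolynomial (Fin n) k) *
                monomial ((insert (pivElt q l hq) (insert t A \ {i})).sup D -
                  ((insert (pivElt q l hq) (insert t A \ {i})) \ {i'}).sup D) 1))) := by
    intro i hiL
    have hpi : pivElt q l hq ≠ i := fun h => hpL (h ▸ hiL)
    have hBi : (insert (pivElt q l hq) (insert t A)) \ {i}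
        = insert (pivElt q l hq) (insert t A \ {i}) := (insert_sdiff_swap hpi _).symm
    have hpGi : pivElt q l hq ∉ insert t A \ {i} := by
      simp only [mem_sdiff]; exact fun h => hpG h.1
    rw [hBi, taylorD_single, Finset.sum_insert hpGi]
    congr 1
    · have hrem : insert (pivElt q l hq) (insert t A \ {i}) \ {pivElt q l hq}
          = insert t A \ {i} := by
        rw [sdiff_singleton_eq_erase, erase_insert hpGi]
      rw [hrem]
    · have hdisj : Disjoint (Lset q l \ {i}) (A \ Lset q l) := by
        rw [Finset.disjoint_left]
        intro x hx hx2
        exact (mem_sdiff.mp hx2).2 (mem_sdiff.mp hx).1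
      have hsplit : insert t A \ {i} = (Lset q l \ {i}) ∪ (A \ Lset q l) := by
        ext x
        simp only [mem_union, mem_sdiff, mem_singleton, mem_insert]
        constructor
        · rintro ⟨(rfl | hxA), hne⟩
          · exact Or.inl ⟨htL, hne⟩
          · by_cases hxL : x ∈ Lset q l
            · exact Or.inl ⟨hxL, hne⟩
            · exact Or.inr ⟨hxA, hxL⟩
        · rintro (⟨hxL, hne⟩ | ⟨hxA, hxL⟩)
          · exact ⟨mem_insert.mp (hLG hxL), hne⟩
          · refine ⟨Or.inr hxA, ?_⟩
            rintro rfl; exact hxL hiL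
      rw [← Finset.sum_union hdisj, hsplit]
  rw [sigCorr, map_sum, Finset.sum_congr rfl hterm, Finset.sum_add_distrib,
    Finset.sum_add_distrib]
  -- Part 1 : the `i' = p` terms give M0
  have hP1 : (∑ i ∈ Lset q l, Finsupp.single (insert t A \ {i})
          (((-1 : MvPolynomial (Fin n) k) ^ (l + 1) *
            (fsign {t} A : MvPolynomial (Fin n) k) * c t *
            (fsign {i} (insert t A \ {i}) : MvPolynomial (Fin n) k) *
            monomial (D t + A.sup D - (insert (pivElt q l hq) (insert t A \ {i})).sup D) 1) *
           ((fsign {pivElt q l hq} (insert t A \ {i}) : MvPolynomial (Fin n) k) *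
            monomial ((insert (pivElt q l hq) (insert t A \ {i})).sup D -
              (insert t A \ {i}).sup D) 1)))
      = Finsupp.single A (c t * monomial (D t) (1 : k))
        + ∑ i ∈ A ∩ Lset q l, Finsupp.single (insert t A \ {i})
            ((fsign {t} A : MvPolynomial (Fin n) k) * c t *
              ((fsign {i} (insert t A \ {i}) : MvPolynomial (Fin n) k) *
                monomial (D t + A.sup D - (insert t A \ {i}).sup D) (1 : k))) := by
    conv_lhs => rw [← hALins]
    rw [Finset.sum_insert htAL]
    congr 1
    · rw [hsetAt]
      congr 1
      have hfpA : fsign {pivElt q l hq} A = (-1 : ℤ) ^ (l - 1) := by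
        rw [fsign_singleton, if_neg hpiv, nuF_pivElt hq, hcardAL]
      have hb1 : A.sup D ≤ (insert (pivElt q l hq) A).sup D :=
        Finset.sup_mono (subset_insert _ _)
      have hb2 : (insert (pivElt q l hq) A).sup D ≤ D t + A.sup D := by
        rw [Finset.sup_insert]
        exact sup_le (hDpG.trans hGub) le_add_self
      have hmE1 : monomial (D t + A.sup D - (insert (pivElt q l hq) A).sup D) (1:k) *
          monomial ((insert (pivElt q l hq) A).sup D - A.sup D) 1 = monomial (D t) 1 := by
        rw [mono_mul_mono, tsub_add_tsub_cancel hb2 hb1, add_tsub_cancel_right]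
      calc ((-1 : MvPolynomial (Fin n) k) ^ (l + 1) *
            (fsign {t} A : MvPolynomial (Fin n) k) * c t *
            (fsign {t} A : MvPolynomial (Fin n) k) *
            monomial (D t + A.sup D - (insert (pivElt q l hq) A).sup D) 1) *
           ((fsign {pivElt q l hq} A : MvPolynomial (Fin n) k) *
            monomial ((insert (pivElt q l hq) A).sup D - A.sup D) 1)
          = (-1 : MvPolynomial (Fin n) k) ^ (l + 1) *
            ((((-1 : ℤ) ^ (l - 1) : ℤ) : MvPolynomial (Fin n) k) *
              (((fsign {t} A : MvPolynomial (Fin n) k) *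
                (fsign {t} A : MvPolynomial (Fin n) k)) *
               (monomial (D t + A.sup D - (insert (pivElt q l hq) A).sup D) (1:k) *
                monomial ((insert (pivElt q l hq) A).sup D - A.sup D) 1) * c t)) := by
            rw [hfpA]; ring
        _ = (-1 : MvPolynomial (Fin n) k) ^ (l + 1) *
            ((((-1 : ℤ) ^ (l - 1) : ℤ) : MvPolynomial (Fin n) k) *
              (c t * monomial (D t) 1)) := by
            rw [cast_sq htA, hmE1]; ring
        _ = c t * monomial (D t) 1 := pow_cancel (by omega) _
    · refine Finset.sum_congr rfl fun i hi => ?_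
      have hiA : i ∈ A := (mem_inter.mp hi).1
      have hiL : i ∈ Lset q l := (mem_inter.mp hi).2
      congr 1
      have hpGi : pivElt q l hq ∉ insert t A \ {i} := by
        simp only [mem_sdiff]; exact fun h => hpG h.1
      have hGiL : (insert t A \ {i}) ∩ Lset q l = Lset q l \ {i} := by
        ext x
        simp only [mem_inter, mem_sdiff, mem_singleton]
        constructor
        · rintro ⟨⟨_, hxne⟩, hxL⟩; exact ⟨hxL, hxne⟩
        · rintro ⟨hxL, hxne⟩; exact ⟨⟨hLG hxL, hxne⟩, hxL⟩
      have hfpGi : fsign {pivElt q l hq} (insert t A \ {i}) = (-1 : ℤ) ^ (l - 1) := by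
        rw [fsign_singleton, if_neg hpGi, nuF_pivElt hq, hGiL,
          card_sdiff_of_subset (singleton_subset_iff.mpr hiL), card_singleton, Lset_card hq]
      have hm : monomial (D t + A.sup D - (insert (pivElt q l hq) (insert t A \ {i})).sup D) (1:k) *
          monomial ((insert (pivElt q l hq) (insert t A \ {i})).sup D -
            (insert t A \ {i}).sup D) 1
          = monomial (D t + A.sup D - (insert t A \ {i}).sup D) 1 := by
        rw [mono_mul_mono,
          tsub_add_tsub_cancel (hBiBound i) (Finset.sup_mono (subset_insert _ _))]
      calc ((-1 : MvPolynomial (Fin n) k) ^ (l + 1) *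
            (fsign {t} A : MvPolynomial (Fin n) k) * c t *
            (fsign {i} (insert t A \ {i}) : MvPolynomial (Fin n) k) *
            monomial (D t + A.sup D - (insert (pivElt q l hq) (insert t A \ {i})).sup D) 1) *
           ((fsign {pivElt q l hq} (insert t A \ {i}) : MvPolynomial (Fin n) k) *
            monomial ((insert (pivElt q l hq) (insert t A \ {i})).sup D -
              (insert t A \ {i}).sup D) 1)
          = (-1 : MvPolynomial (Fin n) k) ^ (l + 1) *
            ((((-1 : ℤ) ^ (l - 1) : ℤ) : MvPolynomial (Fin n) k) *
              ((fsign {t} A : MvPolynomial (Fin n) k) * c t *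
               ((fsign {i} (insert t A \ {i}) : MvPolynomial (Fin n) k) *
                (monomial (D t + A.sup D - (insert (pivElt q l hq) (insert t A \ {i})).sup D) (1:k) *
                 monomial ((insert (pivElt q l hq) (insert t A \ {i})).sup D -
                   (insert t A \ {i}).sup D) 1)))) := by
            rw [hfpGi]; ring
        _ = (-1 : MvPolynomial (Fin n) k) ^ (l + 1) *
            ((((-1 : ℤ) ^ (l - 1) : ℤ) : MvPolynomial (Fin n) k) *
              ((fsign {t} A : MvPolynomial (Fin n) k) * c t *
               ((fsign {i} (insert t A \ {i}) : MvPolynomial (Fin n) k) *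
                monomial (D t + A.sup D - (insert t A \ {i}).sup D) (1:k)))) := by
            rw [hm]
        _ = (fsign {t} A : MvPolynomial (Fin n) k) * c t *
              ((fsign {i} (insert t A \ {i}) : MvPolynomial (Fin n) k) *
                monomial (D t + A.sup D - (insert t A \ {i}).sup D) (1:k)) :=
            pow_cancel (by omega) _
  -- Part 2 : the L×L off-diagonal terms cancel
  have hP2 : (∑ i ∈ Lset q l, ∑ i' ∈ Lset q l \ {i}, Finsupp.single
              ((insert (pivElt q l hq) (insert t A \ {i})) \ {i'})
              (((-1 : MvPolynomial (Fin n) k) ^ (l + 1) *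
                (fsign {t} A : MvPolynomial (Fin n) k) * c t *
                (fsign {i} (insert t A \ {i}) : MvPolynomial (Fin n) k) *
                monomial (D t + A.sup D -
                  (insert (pivElt q l hq) (insert t A \ {i})).sup D) 1) *
               ((fsign {i'} ((insert (pivElt q l hq) (insert t A \ {i})) \ {i'}) :
                   MvPolynomial (Fin n) k) *
                monomial ((insert (pivElt q l hq) (insert t A \ {i})).sup D -
                  ((insert (pivElt q l hq) (insert t A \ {i})) \ {i'}).sup D) 1)))
      = 0 := by
    refine sum_antisymm (Lset q l) _ fun i hi i' hi' hne => ?_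
    have hiG : i ∈ insert t A := hLG hi
    have hi'G : i' ∈ insert t A := hLG hi'
    have hip : i < pivElt q l hq := (lt_pivElt_iff hq).mpr hi
    have hi'p : i' < pivElt q l hq := (lt_pivElt_iff hq).mpr hi'
    have hpi : pivElt q l hq ≠ i := ne_of_gt hip
    have hpi' : pivElt q l hq ≠ i' := ne_of_gt hi'p
    have hC2i : i ∉ (insert t A \ {i}) \ {i'} := by simp
    have hC2i' : i' ∉ (insert t A \ {i}) \ {i'} := by simp
    have hC2p : pivElt q l hq ∉ (insert t A \ {i}) \ {i'} := by
      simp only [mem_sdiff]; exact fun h => hpG h.1.1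
    have hs1 : (insert (pivElt q l hq) (insert t A \ {i})) \ {i'}
        = insert (pivElt q l hq) ((insert t A \ {i}) \ {i'}) :=
      (insert_sdiff_swap hpi' _).symm
    have hs2 : (insert (pivElt q l hq) (insert t A \ {i'})) \ {i}
        = insert (pivElt q l hq) ((insert t A \ {i}) \ {i'}) := by
      rw [← insert_sdiff_swap hpi, sdiff_sdiff_swap']
    rw [hs1, hs2, ← Finsupp.single_add]
    have hm1 : monomial (D t + A.sup D -
          (insert (pivElt q l hq) (insert t A \ {i})).sup D) (1:k) *
        monomial ((insert (pivElt q l hq) (insert t A \ {i})).sup D -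
          (insert (pivElt q l hq) ((insert t A \ {i}) \ {i'})).sup D) 1
        = monomial (D t + A.sup D -
            (insert (pivElt q l hq) ((insert t A \ {i}) \ {i'})).sup D) 1 := by
      rw [mono_mul_mono, tsub_add_tsub_cancel (hBiBound i)
        (Finset.sup_mono (insert_subset_insert _ sdiff_subset))]
    have hm2 : monomial (D t + A.sup D -
          (insert (pivElt q l hq) (insert t A \ {i'})).sup D) (1:k) *
        monomial ((insert (pivElt q l hq) (insert t A \ {i'})).sup D -
          (insert (pivElt q l hq) ((insert t A \ {i}) \ {i'})).sup D) 1
        = monomial (D t + A.sup D -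
            (insert (pivElt q l hq) ((insert t A \ {i}) \ {i'})).sup D) 1 := by
      rw [mono_mul_mono, tsub_add_tsub_cancel (hBiBound i')
        (Finset.sup_mono (insert_subset_insert _
          (by rw [sdiff_sdiff_swap']; exact sdiff_subset)))]
    have hs3 : insert i' ((insert t A \ {i}) \ {i'}) = insert t A \ {i} := by
      rw [sdiff_singleton_eq_erase ]
      exact insert_erase (mem_sdiff.mpr ⟨hi'G, by simpa using hne.symm⟩)
    have hs4 : insert i ((insert t A \ {i}) \ {i'}) = insert t A \ {i'} := by
      rw [sdiff_sdiff_swap', sdiff_singleton_eq_erase]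
      exact insert_erase (mem_sdiff.mpr ⟨hiG, by simpa using hne⟩)
    have core := fsign_core_pivot hne hC2i hC2i' hC2p hip hi'p
    rw [hs3, hs4] at core
    have hcast : ((fsign {i} (insert t A \ {i}) : MvPolynomial (Fin n) k) *
          (fsign {i'} (insert (pivElt q l hq) ((insert t A \ {i}) \ {i'})) :
            MvPolynomial (Fin n) k))
        + ((fsign {i'} (insert t A \ {i'}) : MvPolynomial (Fin n) k) *
          (fsign {i} (insert (pivElt q l hq) ((insert t A \ {i}) \ {i'})) :
            MvPolynomial (Fin n) k)) = 0 := by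
      rw [← Int.cast_mul, ← Int.cast_mul, ← Int.cast_add, core, Int.cast_zero]
    have ee1 : ((-1 : MvPolynomial (Fin n) k) ^ (l + 1) *
          (fsign {t} A : MvPolynomial (Fin n) k) * c t *
          (fsign {i} (insert t A \ {i}) : MvPolynomial (Fin n) k) *
          monomial (D t + A.sup D -
            (insert (pivElt q l hq) (insert t A \ {i})).sup D) 1) *
        ((fsign {i'} (insert (pivElt q l hq) ((insert t A \ {i}) \ {i'})) :
            MvPolynomial (Fin n) k) *
          monomial ((insert (pivElt q l hq) (insert t A \ {i})).sup D -
            (insert (pivElt q l hq) ((insert t A \ {i}) \ {i'})).sup D) 1)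
        = ((fsign {i} (insert t A \ {i}) : MvPolynomial (Fin n) k) *
            (fsign {i'} (insert (pivElt q l hq) ((insert t A \ {i}) \ {i'})) :
              MvPolynomial (Fin n) k)) *
          ((-1 : MvPolynomial (Fin n) k) ^ (l + 1) *
            (fsign {t} A : MvPolynomial (Fin n) k) * c t *
            monomial (D t + A.sup D -
              (insert (pivElt q l hq) ((insert t A \ {i}) \ {i'})).sup D) 1) := by
      rw [← hm1]; ring
    have ee2 : ((-1 : MvPolynomial (Fin n) k) ^ (l + 1) *
          (fsign {t} A : MvPolynomial (Fin n) k) * c t *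
          (fsign {i'} (insert t A \ {i'}) : MvPolynomial (Fin n) k) *
          monomial (D t + A.sup D -
            (insert (pivElt q l hq) (insert t A \ {i'})).sup D) 1) *
        ((fsign {i} (insert (pivElt q l hq) ((insert t A \ {i}) \ {i'})) :
            MvPolynomial (Fin n) k) *
          monomial ((insert (pivElt q l hq) (insert t A \ {i'})).sup D -
            (insert (pivElt q l hq) ((insert t A \ {i}) \ {i'})).sup D) 1)
        = ((fsign {i'} (insert t A \ {i'}) : MvPolynomial (Fin n) k) *
            (fsign {i} (insert (pivElt q l hq) ((insert t A \ {i}) \ {i'})) :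
              MvPolynomial (Fin n) k)) *
          ((-1 : MvPolynomial (Fin n) k) ^ (l + 1) *
            (fsign {t} A : MvPolynomial (Fin n) k) * c t *
            monomial (D t + A.sup D -
              (insert (pivElt q l hq) ((insert t A \ {i}) \ {i'})).sup D) 1) := by
      rw [← hm2]; ring
    rw [ee1, ee2, ← add_mul, hcast, zero_mul, Finsupp.single_zero]
  -- Part 3 : the A \ L terms cancel against the correction terms of σ∂
  have hP3 : (∑ i ∈ Lset q l, ∑ i' ∈ A \ Lset q l, Finsupp.single
              ((insert (pivElt q l hq) (insert t A \ {i})) \ {i'})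
              (((-1 : MvPolynomial (Fin n) k) ^ (l + 1) *
                (fsign {t} A : MvPolynomial (Fin n) k) * c t *
                (fsign {i} (insert t A \ {i}) : MvPolynomial (Fin n) k) *
                monomial (D t + A.sup D -
                  (insert (pivElt q l hq) (insert t A \ {i})).sup D) 1) *
               ((fsign {i'} ((insert (pivElt q l hq) (insert t A \ {i})) \ {i'}) :
                   MvPolynomial (Fin n) k) *
                monomial ((insert (pivElt q l hq) (insert t A \ {i})).sup D -
                  ((insert (pivElt q l hq) (insert t A \ {i})) \ {i'}).sup D) 1)))
      + (∑ i ∈ A \ Lset q l, ((fsign {i} (A \ {i}) : MvPolynomial (Fin n) k) *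
          monomial (A.sup D - (A \ {i}).sup D) (1 : k)) •
            sigCorr k n q l hq D c (A \ {i}) t) = 0 := by
    rw [Finset.sum_comm]
    have hd : ∀ i₀ ∈ A \ Lset q l,
        ((fsign {i₀} (A \ {i₀}) : MvPolynomial (Fin n) k) *
          monomial (A.sup D - (A \ {i₀}).sup D) (1 : k)) •
            sigCorr k n q l hq D c (A \ {i₀}) t
        = ∑ i ∈ Lset q l, Finsupp.single
            ((insert (pivElt q l hq) (insert t (A \ {i₀}))) \ {i})
            (((fsign {i₀} (A \ {i₀}) : MvPolynomial (Fin n) k) *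
              monomial (A.sup D - (A \ {i₀}).sup D) (1 : k)) *
             ((-1 : MvPolynomial (Fin n) k) ^ (l + 1) *
              (fsign {t} (A \ {i₀}) : MvPolynomial (Fin n) k) * c t *
              (fsign {i} (insert t (A \ {i₀}) \ {i}) : MvPolynomial (Fin n) k) *
              monomial (D t + (A \ {i₀}).sup D -
                ((insert (pivElt q l hq) (insert t (A \ {i₀}))) \ {i}).sup D) 1)) := by
      intro i₀ _
      rw [sigCorr, Finset.smul_sum]
      exact Finset.sum_congr rfl fun i _ => Finsupp.smul_single' _ _ _
    rw [Finset.sum_congr rfl hd, ← Finset.sum_add_distrib]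
    refine Finset.sum_eq_zero fun i₀ hi₀ => ?_
    rw [← Finset.sum_add_distrib]
    refine Finset.sum_eq_zero fun i hiL => ?_
    have hi₀A : i₀ ∈ A := (mem_sdiff.mp hi₀).1
    have hi₀L : i₀ ∉ Lset q l := (mem_sdiff.mp hi₀).2
    have hip : i < pivElt q l hq := (lt_pivElt_iff hq).mpr hiL
    have hpi : pivElt q l hq ≠ i := ne_of_gt hip
    have hpi₀ : pivElt q l hq ≠ i₀ := fun h => hpiv (h ▸ hi₀A)
    have hpi₀lt : pivElt q l hq < i₀ :=
      lt_of_le_of_ne (le_of_not_gt fun hcon => hi₀L ((lt_pivElt_iff hq).mp hcon)) hpi₀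
    have hti₀ : t ≠ i₀ := fun h => hi₀L (h ▸ htL)
    have hii₀ : i ≠ i₀ := ne_of_lt (hip.trans hpi₀lt)
    have hsV : insert t (A \ {i₀}) = insert t A \ {i₀} := insert_sdiff_swap hti₀ A
    rw [hsV]
    have hsV2 : (insert (pivElt q l hq) (insert t A \ {i₀})) \ {i}
        = insert (pivElt q l hq) ((insert t A \ {i}) \ {i₀}) := by
      rw [← insert_sdiff_swap hpi, sdiff_sdiff_swap']
    have hsW : (insert (pivElt q l hq) (insert t A \ {i})) \ {i₀}
        = insert (pivElt q l hq) ((insert t A \ {i}) \ {i₀}) :=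
      (insert_sdiff_swap hpi₀ _).symm
    rw [hsV2, hsW, ← Finsupp.single_add]
    have hm1 : monomial (D t + A.sup D -
          (insert (pivElt q l hq) (insert t A \ {i})).sup D) (1:k) *
        monomial ((insert (pivElt q l hq) (insert t A \ {i})).sup D -
          (insert (pivElt q l hq) ((insert t A \ {i}) \ {i₀})).sup D) 1
        = monomial (D t + A.sup D -
            (insert (pivElt q l hq) ((insert t A \ {i}) \ {i₀})).sup D) 1 := by
      rw [mono_mul_mono, tsub_add_tsub_cancel (hBiBound i)
        (Finset.sup_mono (insert_subset_insert _ sdiff_subset))]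
    have hLsub2 : Lset q l ⊆ insert t A \ {i₀} := by
      intro x hx
      refine mem_sdiff.mpr ⟨hLG hx, ?_⟩
      simp only [mem_singleton]
      rintro rfl; exact hi₀L hx
    have hbp' : D (pivElt q l hq) ≤ (insert t A \ {i₀}).sup D :=
      hgap.trans (Finset.sup_mono hLsub2)
    have hub2' : (insert t A \ {i₀}).sup D ≤ D t + (A \ {i₀}).sup D := by
      rw [← hsV, Finset.sup_insert]
      exact sup_le le_self_add le_add_self
    have hCsub : (insert t A \ {i}) \ {i₀} ⊆ insert t A \ {i₀} := by
      rw [sdiff_sdiff_swap']; exact sdiff_subset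
    have hb2 : (insert (pivElt q l hq) ((insert t A \ {i}) \ {i₀})).sup D
        ≤ D t + (A \ {i₀}).sup D := by
      rw [Finset.sup_insert]
      exact sup_le (hbp'.trans hub2') ((Finset.sup_mono hCsub).trans hub2')
    have hm2 : monomial (A.sup D - (A \ {i₀}).sup D) (1:k) *
        monomial (D t + (A \ {i₀}).sup D -
          (insert (pivElt q l hq) ((insert t A \ {i}) \ {i₀})).sup D) 1
        = monomial (D t + A.sup D -
            (insert (pivElt q l hq) ((insert t A \ {i}) \ {i₀})).sup D) 1 := by
      rw [mono_mul_mono, tsub_helper _ _ _ _ (Finset.sup_mono sdiff_subset) hb2]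
    have hE4 := fsign_E4 (G := insert t A) (mem_insert_self t A) (hLG hiL)
      (mem_insert_of_mem hi₀A) hpG htplt hip hpi₀lt
    rw [hsetAt] at hE4
    have hcast : ((fsign {t} A : MvPolynomial (Fin n) k) *
          (fsign {i} (insert t A \ {i}) : MvPolynomial (Fin n) k) *
          (fsign {i₀} (insert (pivElt q l hq) ((insert t A \ {i}) \ {i₀})) :
            MvPolynomial (Fin n) k))
        + ((fsign {i₀} (A \ {i₀}) : MvPolynomial (Fin n) k) *
          (fsign {t} (A \ {i₀}) : MvPolynomial (Fin n) k) *
          (fsign {i} ((insert t A \ {i₀}) \ {i}) : MvPolynomial (Fin n) k)) = 0 := by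
      rw [← Int.cast_mul, ← Int.cast_mul, ← Int.cast_mul, ← Int.cast_mul,
        ← Int.cast_add, hE4, Int.cast_zero]
    have ee1 : ((-1 : MvPolynomial (Fin n) k) ^ (l + 1) *
          (fsign {t} A : MvPolynomial (Fin n) k) * c t *
          (fsign {i} (insert t A \ {i}) : MvPolynomial (Fin n) k) *
          monomial (D t + A.sup D -
            (insert (pivElt q l hq) (insert t A \ {i})).sup D) 1) *
        ((fsign {i₀} (insert (pivElt q l hq) ((insert t A \ {i}) \ {i₀})) :
            MvPolynomial (Fin n) k) *
          monomial ((insert (pivElt q l hq) (insert t A \ {i})).sup D -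
            (insert (pivElt q l hq) ((insert t A \ {i}) \ {i₀})).sup D) 1)
        = ((fsign {t} A : MvPolynomial (Fin n) k) *
            (fsign {i} (insert t A \ {i}) : MvPolynomial (Fin n) k) *
            (fsign {i₀} (insert (pivElt q l hq) ((insert t A \ {i}) \ {i₀})) :
              MvPolynomial (Fin n) k)) *
          ((-1 : MvPolynomial (Fin n) k) ^ (l + 1) * c t *
            monomial (D t + A.sup D -
              (insert (pivElt q l hq) ((insert t A \ {i}) \ {i₀})).sup D) 1) := by
      rw [← hm1]; ring
    have ee2 : ((fsign {i₀} (A \ {i₀}) : MvPolynomial (Fin n) k) *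
          monomial (A.sup D - (A \ {i₀}).sup D) (1 : k)) *
        ((-1 : MvPolynomial (Fin n) k) ^ (l + 1) *
          (fsign {t} (A \ {i₀}) : MvPolynomial (Fin n) k) * c t *
          (fsign {i} ((insert t A \ {i₀}) \ {i}) : MvPolynomial (Fin n) k) *
          monomial (D t + (A \ {i₀}).sup D -
            (insert (pivElt q l hq) ((insert t A \ {i}) \ {i₀})).sup D) 1)
        = ((fsign {i₀} (A \ {i₀}) : MvPolynomial (Fin n) k) *
            (fsign {t} (A \ {i₀}) : MvPolynomial (Fin n) k) *
            (fsign {i} ((insert t A \ {i₀}) \ {i}) : MvPolynomial (Fin n) k)) *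
          ((-1 : MvPolynomial (Fin n) k) ^ (l + 1) * c t *
            monomial (D t + A.sup D -
              (insert (pivElt q l hq) ((insert t A \ {i}) \ {i₀})).sup D) 1) := by
      rw [← hm2]; ring
    rw [ee1, ee2, ← add_mul, hcast, zero_mul, Finsupp.single_zero]
  rw [hP1, hP2, eq_neg_of_add_eq_zero_left hP3]
  abel

lemma cardAL {l : ℕ} (hq : l < q) {A : Finset (Fin q)} {t : Fin q}
    (hA : Lset q l \ A = {t}) : (A ∩ Lset q l).card = l - 1 := by
  have htLA : t ∈ Lset q l \ A := hA ▸ mem_singleton_self t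
  have htL : t ∈ Lset q l := (mem_sdiff.mp htLA).1
  have htA : t ∉ A := (mem_sdiff.mp htLA).2
  have htAL : t ∉ A ∩ Lset q l := by simp [htA]
  have hALins : insert t (A ∩ Lset q l) = Lset q l := by
    ext x
    simp only [mem_insert, mem_inter]
    constructor
    · rintro (rfl | ⟨_, h⟩)
      · exact htL
      · exact h
    · intro hx
      by_cases hxA : x ∈ A
      · exact Or.inr ⟨hxA, hx⟩
      · have : x ∈ Lset q l \ A := mem_sdiff.mpr ⟨hx, hxA⟩
        rw [hA, mem_singleton] at this
        exact Or.inl this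
  have h1 := Finset.card_insert_of_notMem htAL
  rw [hALins, Lset_card hq] at h1
  omega

lemma tOf_eq {l : ℕ} (hq : l < q) (A : Finset (Fin q)) (t : Fin q)
    (hA : Lset q l \ A = {t}) : tOf q l hq A = t := by
  have htLA : t ∈ Lset q l \ A := hA ▸ mem_singleton_self t
  have hne : (Lset q l \ A).Nonempty := ⟨t, htLA⟩
  rw [tOf, dif_pos hne]
  refine le_antisymm (min'_le _ _ htLA) (le_min' _ _ _ fun y hy => ?_)
  rw [hA, mem_singleton] at hy
  exact le_of_eq hy.symm

end LemBHelpers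

end TaylorHelp
end HelperSection

open TaylorHelp

/-- **Lemma 5.4 of the paper.**
For any `s ∈ [r]` and any `A ⊆ [q]` with `[l] ∖ A = {t}` a singleton and
`l+1 ∉ A`, one has `(∂σ_{e_s} + σ_{e_s}∂)(ε_A) = a_s ε_A` in the pivot
resolution `T_{1,…,l}`. -/
theorem homotopy_on_basis_without_pivot {k : Type*} [Field k] {n q l : ℕ}
    (hl : 2 ≤ l) (hq : l < q)
    (D : Fin q → (Fin n →₀ ℕ))
    (hne : ∀ i : Fin q, D i ≠ 0)
    (hmin : ∀ i j : Fin q, i ≠ j → ¬ lcmMono k n q D {i} ∣ lcmMono k n q D {j})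
    (hgap : lcmMono k n q D {pivElt q l hq} ∣ lcmMono k n q D (Lset q l))
    (r : ℕ) (a : Fin r → Fin q → MvPolynomial (Fin n) k)
    (s : Fin r) (A : Finset (Fin q)) (t : Fin q)
    (hA : Lset q l \ A = {t}) (hpiv : pivElt q l hq ∉ A) :
    taylorD k n q D (sigmaMap k n q l hq D (a s) (Finsupp.single A 1)) +
      sigmaMap k n q l hq D (a s) (taylorD k n q D (Finsupp.single A 1)) =
    aElt k n q D (a s) • Finsupp.single A 1 := by
  classical
  have htLA : t ∈ Lset q l \ A := hA ▸ Finset.mem_singleton_self t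
  have htL : t ∈ Lset q l := (Finset.mem_sdiff.mp htLA).1
  have htA : t ∉ A := (Finset.mem_sdiff.mp htLA).2
  have hcardAL' : (A ∩ Lset q l).card = l - 1 := cardAL hq hA
  have hgap' : D (pivElt q l hq) ≤ (Lset q l).sup D := by
    have hg := hgap
    rw [lcmMono, lcmMono, MvPolynomial.monomial_dvd_monomial] at hg
    rcases hg with ⟨h1 | h1, -⟩
    · exact absurd h1 one_ne_zero
    · simpa using h1
  -- σ(ε_A)
  have hσA : sigmaMap k n q l hq D (a s) (Finsupp.single A 1)
      = sigTerm k n q D (a s) A (insert t A)ᶜ + sigCorr k n q l hq D (a s) A t := by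
    rw [sigmaMap, Finsupp.linearCombination_single, one_smul,
      if_neg (not_ne_iff.mpr hcardAL'), if_neg hpiv, tOf_eq hq A t hA]
  have hsigA : sigTerm k n q D (a s) A Aᶜ
      = tterm D (a s) t A + sigTerm k n q D (a s) A (insert t A)ᶜ := by
    rw [sigTerm, sigTerm, tterm, Finset.compl_insert]
    exact (Finset.add_sum_erase _ _ (Finset.mem_compl.mpr htA)).symm
  have hσA' : sigmaMap k n q l hq D (a s) (Finsupp.single A 1)
      = sigTerm k n q D (a s) A Aᶜ - tterm D (a s) t A
        + sigCorr k n q l hq D (a s) A t := by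
    rw [hσA, hsigA]; abel
  -- ∂(ε_A)
  have hE_A : taylorD k n q D (Finsupp.single A (1 : MvPolynomial (Fin n) k))
      = ∑ i ∈ A, Finsupp.single (A \ {i})
          ((fsign {i} (A \ {i}) : MvPolynomial (Fin n) k) *
            monomial (A.sup D - (A \ {i}).sup D) (1 : k)) := by
    rw [taylorD_single]; simp only [one_mul]
  -- the two branches of σ on ∂(ε_A)
  have hb1 : ∀ i ∈ A ∩ Lset q l,
      sigmaMap k n q l hq D (a s) (Finsupp.single (A \ {i})
        ((fsign {i} (A \ {i}) : MvPolynomial (Fin n) k) *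
          monomial (A.sup D - (A \ {i}).sup D) (1 : k)))
      = ((fsign {i} (A \ {i}) : MvPolynomial (Fin n) k) *
          monomial (A.sup D - (A \ {i}).sup D) (1 : k)) •
        sigTerm k n q D (a s) (A \ {i}) (A \ {i})ᶜ := by
    intro i hi
    have hcond : ((A \ {i}) ∩ Lset q l).card ≠ l - 1 := by
      have hset : (A \ {i}) ∩ Lset q l = (A ∩ Lset q l) \ {i} := by
        ext x
        simp only [Finset.mem_inter, Finset.mem_sdiff, Finset.mem_singleton]
        tauto
      rw [hset, Finset.card_sdiff_of_subset (Finset.singleton_subset_iff.mpr hi), hcardAL',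
        Finset.card_singleton]
      omega
    rw [sigmaMap, Finsupp.linearCombination_single]
    congr 1
    rw [if_pos hcond]
  have hb2 : ∀ i ∈ A \ Lset q l,
      sigmaMap k n q l hq D (a s) (Finsupp.single (A \ {i})
        ((fsign {i} (A \ {i}) : MvPolynomial (Fin n) k) *
          monomial (A.sup D - (A \ {i}).sup D) (1 : k)))
      = ((fsign {i} (A \ {i}) : MvPolynomial (Fin n) k) *
          monomial (A.sup D - (A \ {i}).sup D) (1 : k)) •
        (sigTerm k n q D (a s) (A \ {i}) (A \ {i})ᶜ - tterm D (a s) t (A \ {i})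
          + sigCorr k n q l hq D (a s) (A \ {i}) t) := by
    intro i hi
    have hiA : i ∈ A := (Finset.mem_sdiff.mp hi).1
    have hiL : i ∉ Lset q l := (Finset.mem_sdiff.mp hi).2
    have htAi : t ∉ A \ {i} := fun h => htA (Finset.mem_sdiff.mp h).1
    have hA' : Lset q l \ (A \ {i}) = {t} := by
      ext x
      simp only [Finset.mem_sdiff, Finset.mem_singleton]
      constructor
      · rintro ⟨hxL, hxn⟩
        have hxi : x ≠ i := fun h => hiL (h ▸ hxL)
        have hxA : x ∉ A := fun hxA => hxn ⟨hxA, hxi⟩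
        have hx2 : x ∈ Lset q l \ A := Finset.mem_sdiff.mpr ⟨hxL, hxA⟩
        rw [hA, Finset.mem_singleton] at hx2
        exact hx2
      · rintro rfl
        exact ⟨htL, fun hcon => htA hcon.1⟩
    have hpiv' : pivElt q l hq ∉ A \ {i} := fun h => hpiv (Finset.mem_sdiff.mp h).1
    have hcond : ¬(((A \ {i}) ∩ Lset q l).card ≠ l - 1) := by
      have hset : (A \ {i}) ∩ Lset q l = A ∩ Lset q l := by
        ext x
        simp only [Finset.mem_inter, Finset.mem_sdiff, Finset.mem_singleton]
        constructor
        · rintro ⟨⟨h1, _⟩, h2⟩; exact ⟨h1, h2⟩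
        · rintro ⟨h1, h2⟩; exact ⟨⟨h1, fun he => hiL (he ▸ h2)⟩, h2⟩
      rw [hset, hcardAL']
      exact not_ne_iff.mpr rfl
    have hsig : sigTerm k n q D (a s) (A \ {i}) (A \ {i})ᶜ
        = tterm D (a s) t (A \ {i})
          + sigTerm k n q D (a s) (A \ {i}) (insert t (A \ {i}))ᶜ := by
      rw [sigTerm, sigTerm, tterm, Finset.compl_insert]
      exact (Finset.add_sum_erase _ _ (Finset.mem_compl.mpr htAi)).symm
    rw [sigmaMap, Finsupp.linearCombination_single]
    congr 1
    rw [if_neg hcond, if_neg hpiv', tOf_eq hq _ t hA', hsig]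
    abel
  -- assemble
  have hlemA := lemA D (a s) A
  have hB := (stepL l hq hl D (a s) A t hA hpiv hgap').trans
    (stepR l hq D (a s) A t hA).symm
  have hB' : taylorD k n q D (sigCorr k n q l hq D (a s) A t)
      = (taylorD k n q D (tterm D (a s) t A)
        + ∑ i ∈ A \ Lset q l, ((fsign {i} (A \ {i}) : MvPolynomial (Fin n) k) *
            monomial (A.sup D - (A \ {i}).sup D) (1 : k)) • tterm D (a s) t (A \ {i}))
        - ∑ i ∈ A \ Lset q l, ((fsign {i} (A \ {i}) : MvPolynomial (Fin n) k) *
            monomial (A.sup D - (A \ {i}).sup D) (1 : k)) •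
              sigCorr k n q l hq D (a s) (A \ {i}) t := by
    rw [← hB]; abel
  have hdist : ∀ i ∈ A \ Lset q l,
      ((fsign {i} (A \ {i}) : MvPolynomial (Fin n) k) *
          monomial (A.sup D - (A \ {i}).sup D) (1 : k)) •
        (sigTerm k n q D (a s) (A \ {i}) (A \ {i})ᶜ - tterm D (a s) t (A \ {i})
          + sigCorr k n q l hq D (a s) (A \ {i}) t)
      = ((fsign {i} (A \ {i}) : MvPolynomial (Fin n) k) *
          monomial (A.sup D - (A \ {i}).sup D) (1 : k)) •
          sigTerm k n q D (a s) (A \ {i}) (A \ {i})ᶜ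
        - ((fsign {i} (A \ {i}) : MvPolynomial (Fin n) k) *
          monomial (A.sup D - (A \ {i}).sup D) (1 : k)) •
          tterm D (a s) t (A \ {i})
        + ((fsign {i} (A \ {i}) : MvPolynomial (Fin n) k) *
          monomial (A.sup D - (A \ {i}).sup D) (1 : k)) •
          sigCorr k n q l hq D (a s) (A \ {i}) t := by
    intro i _
    rw [smul_add, smul_sub]
  rw [hσA', map_add, map_sub, hE_A, map_sum,
    ← Finset.sum_inter_add_sum_sdiff A (Lset q l)
      (fun i => sigmaMap k n q l hq D (a s) (Finsupp.single (A \ {i})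
        ((fsign {i} (A \ {i}) : MvPolynomial (Fin n) k) *
          monomial (A.sup D - (A \ {i}).sup D) (1 : k)))),
    Finset.sum_congr rfl hb1, Finset.sum_congr rfl hb2,
    Finset.sum_congr rfl hdist, Finset.sum_add_distrib, Finset.sum_sub_distrib,
    hB', ← hlemA,
    ← Finset.sum_inter_add_sum_sdiff A (Lset q l)
      (fun i => ((fsign {i} (A \ {i}) : MvPolynomial (Fin n) k) *
          monomial (A.sup D - (A \ {i}).sup D) (1 : k)) •
        sigTerm k n q D (a s) (A \ {i}) (A \ {i})ᶜ)]
  abel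
end

section
/- For any 1 ≤ s < s' ≤ r and any subset A ⊆ [q] with A ⊉ [l] such that |A ∩ [l]| = l−2 and l+1 ∈ A, one has (σ_{e_s}σ_{e_{s'}} + σ_{e_{s'}}σ_{e_s})(ε_A) = 0 in the pivot resolution T_{1,…,l}. -/
open MvPolynomial Finset

noncomputable section
lemma Lset_card {q l : ℕ} (hq : l ≤ q) : (Lset q l).card = l := by
  have : Lset q l = (Finset.univ : Finset (Fin l)).map (Fin.castLEEmb hq) := by
    ext x
    simp only [Lset, Finset.mem_filter, Finset.mem_univ, true_and, Finset.mem_map,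
      Fin.castLEEmb, Finset.mem_univ, Function.Embedding.coeFn_mk]
    constructor
    · intro h; exact ⟨⟨x, h⟩, rfl⟩
    · rintro ⟨a, rfl⟩; exact a.isLt
  rw [this, Finset.card_map, Finset.card_univ, Fintype.card_fin]

/-- The coefficient appearing in `sigTerm`. -/
def coefTerm (k : Type*) [Field k] (n q : ℕ) (D : Fin q → (Fin n →₀ ℕ))
    (c : Fin q → MvPolynomial (Fin n) k) (B : Finset (Fin q)) (j : Fin q) :
    MvPolynomial (Fin n) k :=
  (fsign {j} B : MvPolynomial (Fin n) k) * c j *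
    monomial (D j + B.sup D - (insert j B).sup D) (1 : k)

lemma sigTerm_eq (k : Type*) [Field k] (n q : ℕ) (D : Fin q → (Fin n →₀ ℕ))
    (c : Fin q → MvPolynomial (Fin n) k) (A J : Finset (Fin q)) :
    sigTerm k n q D c A J = ∑ j ∈ J, Finsupp.single (insert j A) (coefTerm k n q D c A j) := rfl

lemma J_eq {k : Type*} [Field k] {n q l : ℕ} (hl : 2 ≤ l) (hq : l < q)
    (D : Fin q → (Fin n →₀ ℕ)) (A : Finset (Fin q))
    (hcard : (A ∩ Lset q l).card = l - 2) (hpiv : pivElt q l hq ∈ A)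
    {j : Fin q} (hj : j ∉ A) (c : Fin q → MvPolynomial (Fin n) k)
    (p : MvPolynomial (Fin n) k) :
    sigmaMap k n q l hq D c (Finsupp.single (insert j A) p)
      = p • sigTerm k n q D c (insert j A)
          (Aᶜ.filter fun j' => j' ≠ j ∧ ¬(j ∈ Lset q l ∧ j' ∈ Lset q l)) := by
  simp only [sigmaMap, Finsupp.linearCombination_single]
  by_cases hjL : j ∈ Lset q l
  · have h1 : ((insert j A) ∩ Lset q l).card = l - 1 := by
      rw [Finset.insert_inter_of_mem hjL,
        Finset.card_insert_of_notMem (fun hx => hj (Finset.mem_inter.1 hx).1), hcard]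
      omega
    rw [if_neg (by simp [h1]), if_pos (Finset.mem_insert_of_mem hpiv)]
    congr 2
    -- set equality
    set B := insert j A with hB
    have hcap : (Lset q l ∩ B).card + (Lset q l \ B).card = (Lset q l).card :=
      Finset.card_inter_add_card_sdiff _ _
    rw [Finset.inter_comm] at hcap
    have hL : (Lset q l).card = l := Lset_card hq.le
    have hBL : (Lset q l \ B).card = 1 := by omega
    have hne : (Lset q l \ B).Nonempty := Finset.card_pos.mp (by omega)
    have ht : tOf q l hq B ∈ Lset q l \ B := by
      rw [tOf, dif_pos hne]; exact Finset.min'_mem _ _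
    have huniq : ∀ x ∈ Lset q l \ B, x = tOf q l hq B := by
      obtain ⟨a, ha⟩ := Finset.card_eq_one.mp hBL
      rw [ha] at ht ⊢
      intro x hx
      rw [Finset.mem_singleton] at ht hx
      rw [hx, ht]
    obtain ⟨htL, htB⟩ := Finset.mem_sdiff.1 ht
    ext j'
    simp only [Finset.mem_compl, Finset.mem_insert, Finset.mem_filter, hjL, true_and, hB]
    constructor
    · intro h
      push_neg at h
      obtain ⟨h1, h2, h3⟩ := h
      refine ⟨h3, h2, fun hj'L => h1 ?_⟩
      exact (huniq j' (Finset.mem_sdiff.2 ⟨hj'L, by simp [hB, h2, h3]⟩)).symm ▸ rfl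
    · rintro ⟨h1, h2, h3⟩
      push_neg
      exact ⟨fun hh => h3 (hh ▸ htL), h2, h1⟩
  · have h1 : ((insert j A) ∩ Lset q l).card = l - 2 := by
      rw [Finset.insert_inter_of_notMem hjL]; exact hcard
    rw [if_pos (by rw [h1]; omega)]
    congr 2
    ext j'
    simp only [Finset.mem_compl, Finset.mem_insert, Finset.mem_filter, hjL, false_and,
      not_false_iff, and_true]
    tauto

lemma fsign_singleton' {α : Type*} [LinearOrder α] [DecidableEq α] (j : α) (A : Finset α)
    (hj : j ∉ A) :
    fsign {j} A = (-1 : ℤ) ^ ((A.filter fun b => b < j).card) := by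
  unfold fsign
  rw [if_pos (by simp [Finset.singleton_inter_of_notMem hj])]
  congr 1
  rw [Finset.singleton_product, Finset.filter_map, Finset.card_map]
  rfl

lemma fsign_mul_anticomm {α : Type*} [LinearOrder α] [DecidableEq α] {j j' : α} {A : Finset α}
    (hj : j ∉ A) (hj' : j' ∉ A) (hne : j ≠ j') :
    fsign {j} A * fsign {j'} (insert j A) + fsign {j'} A * fsign {j} (insert j' A) = 0 := by
  rw [fsign_singleton' j A hj, fsign_singleton' j' A hj',
      fsign_singleton' j' _ (by simp [hne.symm, hj']),
      fsign_singleton' j _ (by simp [hne, hj]),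
      Finset.filter_insert, Finset.filter_insert]
  rcases lt_or_gt_of_ne hne with h | h
  · rw [if_pos h, if_neg (not_lt.2 h.le), Finset.card_insert_of_notMem (by simp [hj])]
    ring
  · rw [if_neg (not_lt.2 h.le), if_pos h, Finset.card_insert_of_notMem (by simp [hj'])]
    ring

lemma comp_eq {k : Type*} [Field k] {n q l : ℕ} (hl : 2 ≤ l) (hq : l < q)
    (D : Fin q → (Fin n →₀ ℕ)) (A : Finset (Fin q))
    (hcard : (A ∩ Lset q l).card = l - 2) (hpiv : pivElt q l hq ∈ A)
    (c c' : Fin q → MvPolynomial (Fin n) k) :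
    sigmaMap k n q l hq D c' (sigmaMap k n q l hq D c (Finsupp.single A 1)) =
      ∑ j ∈ Aᶜ, ∑ j' ∈ Aᶜ,
        if j' ≠ j ∧ ¬(j ∈ Lset q l ∧ j' ∈ Lset q l) then
          Finsupp.single (insert j' (insert j A))
            (coefTerm k n q D c A j * coefTerm k n q D c' (insert j A) j')
        else 0 := by
  have step1 : sigmaMap k n q l hq D c (Finsupp.single A 1) = sigTerm k n q D c A Aᶜ := by
    simp only [sigmaMap, Finsupp.linearCombination_single, one_smul]
    rw [if_pos (by rw [hcard]; omega)]
  rw [step1, sigTerm_eq, map_sum]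
  refine Finset.sum_congr rfl fun j hj => ?_
  rw [J_eq hl hq D A hcard hpiv (Finset.mem_compl.1 hj) c', sigTerm_eq, Finset.smul_sum,
    Finset.sum_filter]
  refine Finset.sum_congr rfl fun j' _ => ?_
  split
  · rw [Finsupp.smul_single']
  · rfl

lemma term_cancel {k : Type*} [Field k] {n q : ℕ}
    (D : Fin q → (Fin n →₀ ℕ)) (A : Finset (Fin q))
    {j j' : Fin q} (hj : j ∉ A) (hj' : j' ∉ A) (hne : j ≠ j')
    (c c' : Fin q → MvPolynomial (Fin n) k) :
    Finsupp.single (insert j' (insert j A))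
        (coefTerm k n q D c A j * coefTerm k n q D c' (insert j A) j') +
      Finsupp.single (insert j (insert j' A))
        (coefTerm k n q D c' A j' * coefTerm k n q D c (insert j' A) j) = 0 := by
  rw [Finset.insert_comm, ← Finsupp.single_add]
  have hsign : (fsign {j} A : MvPolynomial (Fin n) k) * (fsign {j'} (insert j A) : ℤ)
      = -((fsign {j'} A : MvPolynomial (Fin n) k) * (fsign {j} (insert j' A) : ℤ)) := by
    have h2 : fsign {j} A * fsign {j'} (insert j A)
        = -(fsign {j'} A * fsign {j} (insert j' A)) := by
      linarith [fsign_mul_anticomm hj hj' hne]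
    exact_mod_cast congrArg (fun z : ℤ => (z : MvPolynomial (Fin n) k)) h2
  have hm : (monomial (D j + A.sup D - (insert j A).sup D) (1 : k)) *
        monomial (D j' + (insert j A).sup D - (insert j' (insert j A)).sup D) (1 : k)
      = (monomial (D j' + A.sup D - (insert j' A).sup D) (1 : k)) *
        monomial (D j + (insert j' A).sup D - (insert j (insert j' A)).sup D) (1 : k) := by
    have hE : (D j + A.sup D - (insert j A).sup D) +
          (D j' + (insert j A).sup D - (insert j' (insert j A)).sup D)
        = (D j' + A.sup D - (insert j' A).sup D) +
          (D j + (insert j' A).sup D - (insert j (insert j' A)).sup D) := by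
      simp only [Finset.sup_insert]
      ext x
      simp only [Finsupp.add_apply, Finsupp.tsub_apply, Finsupp.sup_apply]
      omega
    rw [monomial_mul, monomial_mul, one_mul, hE]
  have hz : coefTerm k n q D c A j * coefTerm k n q D c' (insert j A) j' +
      coefTerm k n q D c' A j' * coefTerm k n q D c (insert j' A) j = 0 := by
    simp only [coefTerm]
    linear_combination (c j * c' j' *
        ((monomial (D j + A.sup D - (insert j A).sup D) (1 : k)) *
          monomial (D j' + (insert j A).sup D - (insert j' (insert j A)).sup D) (1 : k))) * hsign
      - ((fsign {j'} A : MvPolynomial (Fin n) k) * (fsign {j} (insert j' A) : ℤ) *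
          (c j * c' j')) * hm
  rw [hz, Finsupp.single_zero]
end

/-- **Lemma 5.6 of the paper.**
For any `1 ≤ s < s' ≤ r` and any `A ⊆ [q]` with `A ⊉ [l]`, `|A ∩ [l]| = l−2`
and `l+1 ∈ A`, one has `(σ_{e_s}σ_{e_{s'}} + σ_{e_{s'}}σ_{e_s})(ε_A) = 0` in the
pivot resolution `T_{1,…,l}`. -/
theorem sigma_anticomm_on_basis_codim_two {k : Type*} [Field k] {n q l : ℕ}
    (hl : 2 ≤ l) (hq : l < q)
    (D : Fin q → (Fin n →₀ ℕ))
    (hne : ∀ i : Fin q, D i ≠ 0)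
    (hmin : ∀ i j : Fin q, i ≠ j → ¬ lcmMono k n q D {i} ∣ lcmMono k n q D {j})
    (hgap : lcmMono k n q D {pivElt q l hq} ∣ lcmMono k n q D (Lset q l))
    (r : ℕ) (a : Fin r → Fin q → MvPolynomial (Fin n) k)
    (s s' : Fin r) (hss' : s < s') (A : Finset (Fin q))
    (hnsub : ¬ Lset q l ⊆ A) (hcard : (A ∩ Lset q l).card = l - 2)
    (hpiv : pivElt q l hq ∈ A) :
    sigmaMap k n q l hq D (a s) (sigmaMap k n q l hq D (a s') (Finsupp.single A 1)) +
      sigmaMap k n q l hq D (a s') (sigmaMap k n q l hq D (a s) (Finsupp.single A 1)) =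
    0 := by
  rw [comp_eq hl hq D A hcard hpiv (a s') (a s),
      comp_eq hl hq D A hcard hpiv (a s) (a s'), Finset.sum_comm,
      ← Finset.sum_add_distrib]
  refine Finset.sum_eq_zero fun j hj => ?_
  rw [← Finset.sum_add_distrib]
  refine Finset.sum_eq_zero fun j' hj' => ?_
  by_cases h : j' ≠ j ∧ ¬(j ∈ Lset q l ∧ j' ∈ Lset q l)
  · rw [if_pos (⟨h.1.symm, fun hd => h.2 ⟨hd.2, hd.1⟩⟩ :
        j ≠ j' ∧ ¬(j' ∈ Lset q l ∧ j ∈ Lset q l)), if_pos h, add_comm]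
    exact term_cancel D A (Finset.mem_compl.1 hj) (Finset.mem_compl.1 hj') h.1.symm (a s) (a s')
  · rw [if_neg (fun hc => h ⟨hc.1.symm, fun hd => hc.2 ⟨hd.2, hd.1⟩⟩), if_neg h, add_zero]
end
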